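/- arXiv:2204.07497 — 5 statements merged into one kernel-verified Lean document; each statement's English description precedes it below -/
import Mathlib

section
/- Let Re > 0, let u : ℝ × ℝ³ → ℝ³ be twice continuously differentiable (jointly in (t,x)), let p̃ : ℝ × ℝ³ → ℝ be continuously differentiable, and let f : ℝ × ℝ³ → ℝ³ be continuous. Suppose that for all t ∈ ℝ and x ∈ Ω = [0,1]³ the Lamb-form Navier–Stokes equations hold: ∂ₜu − u × (curl u) + Re⁻¹ curl(curl u) + ∇(½|u|² + p̃) = f and div u = 0, together with the boundary conditions u × n = 0 and ½|u|² + p̃ = 0 on ∂Ω for all t. Then for every t ∈ ℝ the kinetic energy E(t) := ½ ∫_Ω |u(t,x)|² dx is differentiable in t with derivative E′(t) = ∫_Ω f(t,x) · u(t,x) dx − Re⁻¹ ∫_Ω |curl u(t,·)(x)|² dx; that is, the energy identity (d/dt) ½‖u‖² + Re⁻¹‖curl u‖² = (f, u) holds. -/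
open MeasureTheory

noncomputable section

/-- Points of ℝ³, represented as functions `Fin 3 → ℝ`. -/
abbrev R3 : Type := Fin 3 → ℝ

/-- Partial derivative in the `i`-th coordinate direction. -/
noncomputable def pd (i : Fin 3) (f : R3 → ℝ) (x : R3) : ℝ :=
  fderiv ℝ f x (Pi.single i 1)

/-- Curl of a vector field on ℝ³. -/
noncomputable def vcurl (v : R3 → R3) (x : R3) : R3 :=
  ![pd 1 (fun y => v y 2) x - pd 2 (fun y => v y 1) x,
    pd 2 (fun y => v y 0) x - pd 0 (fun y => v y 2) x,
    pd 0 (fun y => v y 1) x - pd 1 (fun y => v y 0) x]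

/-- Divergence of a vector field on ℝ³. -/
noncomputable def vdiv (v : R3 → R3) (x : R3) : ℝ :=
  pd 0 (fun y => v y 0) x + pd 1 (fun y => v y 1) x + pd 2 (fun y => v y 2) x

/-- Gradient of a scalar field on ℝ³. -/
noncomputable def vgrad (f : R3 → ℝ) (x : R3) : R3 := fun i => pd i f x

/-- Euclidean dot product on ℝ³. -/
def dot3 (a b : R3) : ℝ := a 0 * b 0 + a 1 * b 1 + a 2 * b 2

/-- Cross product on ℝ³. -/
def cross3 (a b : R3) : R3 :=
  ![a 1 * b 2 - a 2 * b 1, a 2 * b 0 - a 0 * b 2, a 0 * b 1 - a 1 * b 0]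

/-- The closed unit cube Ω = [0,1]³. -/
def cube : Set R3 := Set.Icc 0 1

/-- `x` lies on one of the two faces of the cube orthogonal to direction `i`. -/
def onFace (x : R3) (i : Fin 3) : Prop := x i = 0 ∨ x i = 1

/-- `x` lies on the boundary ∂Ω of the cube. -/
def onBdry (x : R3) : Prop := x ∈ cube ∧ ∃ i : Fin 3, onFace x i

/-- Tangential boundary condition `v × n = 0` on ∂Ω: on each face of the cube
the two components of `v` tangential to that face vanish. -/
def TangentialBC (v : R3 → R3) : Prop :=
  ∀ x ∈ cube, ∀ i : Fin 3, onFace x i → ∀ j : Fin 3, j ≠ i → v x j = 0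

/-- Normal boundary condition `v · n = 0` on ∂Ω: on each face of the cube
the component of `v` normal to that face vanishes. -/
def NormalBC (v : R3 → R3) : Prop :=
  ∀ x ∈ cube, ∀ i : Fin 3, onFace x i → v x i = 0

/-- Time derivative ∂ₜu of a time-dependent vector field. -/
noncomputable def dtv (u : ℝ → R3 → R3) (t : ℝ) (x : R3) : R3 :=
  fun i => deriv (fun s => u s x i) t

-- ## helper lemmas
lemma pd_sub {i : Fin 3} {g h : R3 → ℝ} {x : R3} (hg : DifferentiableAt ℝ g x)
    (hh : DifferentiableAt ℝ h x) :
    pd i (fun y => g y - h y) x = pd i g x - pd i h x := by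
  unfold pd
  rw [fderiv_fun_sub hg hh]; rfl

lemma pd_mul {i : Fin 3} {g h : R3 → ℝ} {x : R3} (hg : DifferentiableAt ℝ g x)
    (hh : DifferentiableAt ℝ h x) :
    pd i (fun y => g y * h y) x = g x * pd i h x + pd i g x * h x := by
  unfold pd
  rw [fderiv_fun_mul hg hh]
  simp [mul_comm]

lemma pd_comp_apply {i j : Fin 3} {F : R3 → R3} {x : R3} (hF : DifferentiableAt ℝ F x) :
    pd i (fun y => F y j) x = fderiv ℝ F x (Pi.single i 1) j := by
  have h : HasFDerivAt (fun y => F y j)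
      ((ContinuousLinearMap.proj (R := ℝ) (φ := fun _ : Fin 3 => ℝ) j).comp (fderiv ℝ F x)) x :=
    (ContinuousLinearMap.proj (R := ℝ) (φ := fun _ : Fin 3 => ℝ) j).hasFDerivAt.comp x
      hF.hasFDerivAt
  unfold pd
  rw [h.fderiv]
  rfl

lemma contDiff_pd {n : ℕ} {g : R3 → ℝ} (hg : ContDiff ℝ (n+1) g) (i : Fin 3) :
    ContDiff ℝ n (pd i g) := by
  have h1 : ContDiff ℝ n (fderiv ℝ g) := hg.fderiv_right (by norm_cast)
  exact (ContinuousLinearMap.apply ℝ ℝ (Pi.single i 1 : R3)).contDiff.comp h1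

lemma contDiff_component {n : ℕ∞} {v : R3 → R3} (hv : ContDiff ℝ n v) (j : Fin 3) :
    ContDiff ℝ n (fun y => v y j) :=
  (ContinuousLinearMap.proj (R := ℝ) (φ := fun _ : Fin 3 => ℝ) j).contDiff.comp hv

lemma continuous_pd {g : R3 → ℝ} (hg : ContDiff ℝ 1 g) (i : Fin 3) :
    Continuous (pd i g) :=
  (ContinuousLinearMap.apply ℝ ℝ (Pi.single i 1 : R3)).continuous.comp
    (hg.continuous_fderiv (by norm_num))

lemma integral_vdiv_eq_zero (F : R3 → R3) (hF : ContDiff ℝ 1 F)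
    (hbd : ∀ x ∈ cube, ∀ i : Fin 3, onFace x i → F x i = 0) :
    ∫ x in cube, vdiv F x = 0 := by
  have hdF : Differentiable ℝ F := hF.differentiable (by norm_num)
  have key := MeasureTheory.integral_divergence_of_hasFDerivAt_off_countable
    (n := 2) (0 : R3) (1 : R3) (fun i => zero_le_one) F (fun x => fderiv ℝ F x) ∅
    Set.countable_empty hF.continuous.continuousOn
    (fun x _ => (hdF x).hasFDerivAt) ?_
  · have hsum : ∀ x : R3, (∑ i : Fin 3, fderiv ℝ F x (Pi.single i 1) i) = vdiv F x := by
      intro x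
      rw [Fin.sum_univ_three, vdiv, pd_comp_apply (hdF x), pd_comp_apply (hdF x),
        pd_comp_apply (hdF x)]
    have hface : ∀ (i : Fin 3) (c : ℝ), c = 0 ∨ c = 1 →
        (∫ x in Set.Icc ((0:R3) ∘ i.succAbove) ((1:R3) ∘ i.succAbove),
          F (i.insertNth c x) i) = 0 := by
      intro i c hc
      refine MeasureTheory.setIntegral_eq_zero_of_forall_eq_zero ?_
      intro x hx
      have hmem : i.insertNth c x ∈ Set.Icc (0:R3) 1 := by
        refine Fin.insertNth_mem_Icc.2 ⟨?_, hx⟩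
        rcases hc with h | h <;> simp [h]
      refine hbd _ hmem i ?_
      simp [onFace, Fin.insertNth_apply_same, hc]
    simp only [Pi.one_apply, Pi.zero_apply] at key
    rw [show Set.Icc (0:R3) 1 = cube from rfl] at key
    have hcong : ∫ x in cube, vdiv F x
        = ∫ x in cube, ∑ i : Fin 3, fderiv ℝ F x (Pi.single i 1) i :=
      MeasureTheory.setIntegral_congr_fun (show MeasurableSet cube from measurableSet_Icc) (fun x _ => (hsum x).symm)
    rw [hcong, key, Fin.sum_univ_three]
    rw [hface 0 1 (Or.inr rfl), hface 0 0 (Or.inl rfl), hface 1 1 (Or.inr rfl),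
      hface 1 0 (Or.inl rfl), hface 2 1 (Or.inr rfl), hface 2 0 (Or.inl rfl)]
    ring
  · have hc : Continuous fun x => ∑ i : Fin 3, fderiv ℝ F x (Pi.single i 1) i := by
      refine continuous_finset_sum _ fun i _ => ?_
      have h1 : Continuous (fderiv ℝ F) := hF.continuous_fderiv (by norm_num)
      exact (ContinuousLinearMap.continuous (ContinuousLinearMap.proj (R := ℝ)
        (φ := fun _ : Fin 3 => ℝ) i)).comp
        ((ContinuousLinearMap.apply ℝ R3 (Pi.single i 1 : R3)).continuous.comp h1)
    exact hc.continuousOn.integrableOn_compact isCompact_Icc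

lemma vdiv_smulfield (P : R3 → ℝ) (v : R3 → R3) (x : R3) (hP : DifferentiableAt ℝ P x)
    (hv : ∀ j : Fin 3, DifferentiableAt ℝ (fun y => v y j) x) :
    vdiv (fun y => fun i => P y * v y i) x = dot3 (vgrad P x) (v x) + P x * vdiv v x := by
  unfold vdiv
  rw [pd_mul hP (hv 0), pd_mul hP (hv 1), pd_mul hP (hv 2)]
  simp only [dot3, vgrad, vdiv]
  ring

lemma vdiv_cross (v w : R3 → R3) (x : R3)
    (hv : ∀ j : Fin 3, DifferentiableAt ℝ (fun y => v y j) x)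
    (hw : ∀ j : Fin 3, DifferentiableAt ℝ (fun y => w y j) x) :
    vdiv (fun y => cross3 (v y) (w y)) x
      = dot3 (w x) (vcurl v x) - dot3 (v x) (vcurl w x) := by
  have e0 : (fun y => cross3 (v y) (w y) 0) = fun y => v y 1 * w y 2 - v y 2 * w y 1 := by
    funext y; simp [cross3]
  have e1 : (fun y => cross3 (v y) (w y) 1) = fun y => v y 2 * w y 0 - v y 0 * w y 2 := by
    funext y; simp [cross3]
  have e2 : (fun y => cross3 (v y) (w y) 2) = fun y => v y 0 * w y 1 - v y 1 * w y 0 := by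
    funext y; simp [cross3]
  unfold vdiv
  simp only [e0, e1, e2]
  rw [pd_sub ((hv 1).fun_mul (hw 2)) ((hv 2).fun_mul (hw 1)),
      pd_sub ((hv 2).fun_mul (hw 0)) ((hv 0).fun_mul (hw 2)),
      pd_sub ((hv 0).fun_mul (hw 1)) ((hv 1).fun_mul (hw 0)),
      pd_mul (hv 1) (hw 2), pd_mul (hv 2) (hw 1), pd_mul (hv 2) (hw 0),
      pd_mul (hv 0) (hw 2), pd_mul (hv 0) (hw 1), pd_mul (hv 1) (hw 0)]
  simp only [dot3, vcurl, Matrix.cons_val_zero, Matrix.cons_val_one, Matrix.head_cons,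
    Matrix.cons_val_two, Matrix.tail_cons]
  ring


/-- Energy identity for the Lamb-form Navier–Stokes equations on the unit cube:
(d/dt) ½‖u‖² + Re⁻¹‖curl u‖² = (f, u). -/
theorem navier_stokes_energy_identity (Re : ℝ) (hRe : 0 < Re)
    (u : ℝ → R3 → R3) (pt : ℝ → R3 → ℝ) (f : ℝ → R3 → R3)
    (hu : ContDiff ℝ 2 (Function.uncurry u))
    (hp : ContDiff ℝ 1 (Function.uncurry pt))
    (hf : Continuous (Function.uncurry f))
    (hmom : ∀ t : ℝ, ∀ x ∈ cube,
      dtv u t x - cross3 (u t x) (vcurl (u t) x) + Re⁻¹ • vcurl (vcurl (u t)) x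
        + vgrad (fun y => (1 / 2) * dot3 (u t y) (u t y) + pt t y) x = f t x)
    (hdiv : ∀ t : ℝ, ∀ x ∈ cube, vdiv (u t) x = 0)
    (hbcu : ∀ t : ℝ, TangentialBC (u t))
    (hbcp : ∀ t : ℝ, ∀ x : R3, onBdry x →
      (1 / 2) * dot3 (u t x) (u t x) + pt t x = 0) :
    ∀ t : ℝ,
      HasDerivAt (fun s => (1 / 2) * ∫ x in cube, dot3 (u s x) (u s x))
        ((∫ x in cube, dot3 (f t x) (u t x))
          - Re⁻¹ * ∫ x in cube, dot3 (vcurl (u t) x) (vcurl (u t) x)) t := by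
  intro t
  -- regularity of fixed-time slices
  have hslice : ∀ s : ℝ, ContDiff ℝ 2 (u s) :=
    fun s => hu.comp ((contDiff_const (c := s)).prodMk contDiff_id)
  have hcomp : ∀ (s : ℝ) (j : Fin 3), ContDiff ℝ 2 (fun y => u s y j) :=
    fun s j => contDiff_component (hslice s) j
  have hptt : ContDiff ℝ 1 (pt t) :=
    hp.comp ((contDiff_const (c := t)).prodMk contDiff_id)
  set P : R3 → ℝ := fun y => (1 / 2) * dot3 (u t y) (u t y) + pt t y with hPdef
  have hPc : ContDiff ℝ 1 P := by
    refine ContDiff.add ?_ hptt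
    refine ContDiff.mul contDiff_const ?_
    have : ContDiff ℝ 1 (fun y => u t y 0 * u t y 0 + u t y 1 * u t y 1 + u t y 2 * u t y 2) :=
      ((((hcomp t 0).mul (hcomp t 0)).add
        ((hcomp t 1).mul (hcomp t 1))).add
        ((hcomp t 2).mul (hcomp t 2))).of_le one_le_two
    simp only [dot3]
    exact this
  set ω : R3 → R3 := vcurl (u t) with hωdef
  have hωj : ∀ j : Fin 3, ContDiff ℝ 1 (fun y => ω y j) := by
    intro j
    fin_cases j <;>
      simp only [hωdef, vcurl, Matrix.cons_val_zero, Matrix.cons_val_one, Matrix.head_cons,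
        Matrix.cons_val_two, Matrix.tail_cons, Fin.isValue] <;>
      exact (contDiff_pd (n := 1) (by exact_mod_cast hcomp t _) _).sub
        (contDiff_pd (n := 1) (by exact_mod_cast hcomp t _) _)
  have hωc : ∀ j : Fin 3, Continuous (fun y => ω y j) := fun j => (hωj j).continuous
  have hcurlωc : ∀ j : Fin 3, Continuous (fun y => vcurl ω y j) := by
    intro j
    fin_cases j <;>
      simp only [vcurl, Matrix.cons_val_zero, Matrix.cons_val_one, Matrix.head_cons,
        Matrix.cons_val_two, Matrix.tail_cons, Fin.isValue] <;>
      exact (continuous_pd (hωj _) _).sub (continuous_pd (hωj _) _)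
  have hucont : ∀ j : Fin 3, Continuous (fun p : ℝ × R3 => u p.1 p.2 j) := fun j =>
    ((ContinuousLinearMap.proj (R := ℝ) (φ := fun _ : Fin 3 => ℝ) j).contDiff.comp hu).continuous
  -- time derivative facts
  have hD : ∀ (s : ℝ) (x : R3) (i : Fin 3),
      HasDerivAt (fun r => u r x i) (fderiv ℝ (Function.uncurry u) (s, x) (1, 0) i) s := by
    intro s x i
    have h1 : HasFDerivAt (Function.uncurry u) (fderiv ℝ (Function.uncurry u) (s, x)) (s, x) :=
      (hu.differentiable (by norm_num) (s, x)).hasFDerivAt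
    have h2 : HasDerivAt (fun r : ℝ => (r, x)) ((1 : ℝ), (0 : R3)) s :=
      (hasDerivAt_id s).prodMk (hasDerivAt_const s x)
    have h3 : HasDerivAt (fun r => Function.uncurry u (r, x))
        (fderiv ℝ (Function.uncurry u) (s, x) (1, 0)) s := h1.comp_hasDerivAt (f := fun r : ℝ => (r, x)) s h2
    exact (ContinuousLinearMap.proj (R := ℝ) (φ := fun _ : Fin 3 => ℝ) i)
      |>.hasFDerivAt.comp_hasDerivAt s h3
  have hdtv_eq : ∀ (s : ℝ) (x : R3) (i : Fin 3),
      dtv u s x i = fderiv ℝ (Function.uncurry u) (s, x) (1, 0) i :=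
    fun s x i => (hD s x i).deriv
  have hDc : ∀ i : Fin 3, Continuous (fun p : ℝ × R3 => fderiv ℝ (Function.uncurry u) p (1, 0) i) := by
    intro i
    have h1 : ContDiff ℝ 1 (fderiv ℝ (Function.uncurry u)) := hu.fderiv_right (by norm_num)
    exact (ContinuousLinearMap.continuous (ContinuousLinearMap.proj (R := ℝ)
      (φ := fun _ : Fin 3 => ℝ) i)).comp
      ((ContinuousLinearMap.apply ℝ R3 ((1 : ℝ), (0 : R3))).continuous.comp h1.continuous)
  -- the parametric integral
  set F : ℝ → R3 → ℝ := fun s x => dot3 (u s x) (u s x) with hFdef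
  set F' : ℝ → R3 → ℝ :=
    fun s x => 2 * dot3 (u s x) (fun i => fderiv ℝ (Function.uncurry u) (s, x) (1, 0) i)
    with hF'def
  have hF'c : Continuous (fun p : ℝ × R3 => F' p.1 p.2) := by
    simp only [hF'def, dot3]
    exact continuous_const.mul
      ((((hucont 0).mul (hDc 0)).add ((hucont 1).mul (hDc 1))).add ((hucont 2).mul (hDc 2)))
  have hFc : Continuous (fun p : ℝ × R3 => F p.1 p.2) := by
    simp only [hFdef, dot3]
    exact (((hucont 0).mul (hucont 0)).add ((hucont 1).mul (hucont 1))).add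
      ((hucont 2).mul (hucont 2))
  obtain ⟨C, hC⟩ := (IsCompact.prod (isCompact_closedBall t 1)
    (isCompact_Icc (a := (0:R3)) (b := 1))).exists_bound_of_continuousOn hF'c.continuousOn
  have hderiv : HasDerivAt (fun s => ∫ x in cube, F s x) (∫ x in cube, F' t x) t := by
    have := hasDerivAt_integral_of_dominated_loc_of_deriv_le
      (μ := volume.restrict cube) (F := F) (F' := F') (x₀ := t)
      (bound := fun _ => C) (s := Metric.ball t 1) (Metric.ball_mem_nhds t one_pos)
      ?_ ?_ ?_ ?_ ?_ ?_
    · exact this.2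
    · exact Filter.Eventually.of_forall fun s =>
        (hFc.comp (Continuous.prodMk_right s)).aestronglyMeasurable
    · exact ((hFc.comp (Continuous.prodMk_right t)).continuousOn.integrableOn_compact
        isCompact_Icc)
    · exact (hF'c.comp (Continuous.prodMk_right t)).aestronglyMeasurable
    · refine (ae_restrict_iff' measurableSet_Icc).2 (Filter.Eventually.of_forall ?_)
      intro x hx s hs
      exact hC (s, x) ⟨Metric.ball_subset_closedBall hs, hx⟩
    · haveI : Fact (volume cube < ⊤) :=
        ⟨IsCompact.measure_lt_top (isCompact_Icc (a := (0:R3)) (b := 1))⟩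
      exact integrable_const C
    · refine Filter.Eventually.of_forall fun x => ?_
      intro s _
      have h1 : HasDerivAt (fun r => F r x)
          ((fderiv ℝ (Function.uncurry u) (s, x) (1, 0) 0 * u s x 0
            + u s x 0 * fderiv ℝ (Function.uncurry u) (s, x) (1, 0) 0)
          + (fderiv ℝ (Function.uncurry u) (s, x) (1, 0) 1 * u s x 1
            + u s x 1 * fderiv ℝ (Function.uncurry u) (s, x) (1, 0) 1)
          + (fderiv ℝ (Function.uncurry u) (s, x) (1, 0) 2 * u s x 2
            + u s x 2 * fderiv ℝ (Function.uncurry u) (s, x) (1, 0) 2)) s := by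
        simp only [hFdef, dot3]
        exact (((hD s x 0).mul (hD s x 0)).add ((hD s x 1).mul (hD s x 1))).add
          ((hD s x 2).mul (hD s x 2))
      refine h1.congr_deriv ?_
      simp only [hF'def, dot3]
      ring
  -- rewrite the derivative value
  -- continuity of various integrands
  have hutc : ∀ j : Fin 3, Continuous (fun x : R3 => u t x j) := fun j => (hcomp t j).continuous
  have hftc : ∀ j : Fin 3, Continuous (fun x : R3 => f t x j) := fun j =>
    ((ContinuousLinearMap.proj (R := ℝ) (φ := fun _ : Fin 3 => ℝ) j).continuous).comp
      (hf.comp (Continuous.prodMk_right t))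
  have hInt1 : IntegrableOn (fun x => dot3 (f t x) (u t x)) cube := by
    refine ContinuousOn.integrableOn_compact (isCompact_Icc (a := (0:R3)) (b := 1)) ?_
    refine Continuous.continuousOn ?_
    simp only [dot3]
    exact (((hftc 0).mul (hutc 0)).add ((hftc 1).mul (hutc 1))).add ((hftc 2).mul (hutc 2))
  have hInt2 : IntegrableOn (fun x => dot3 (u t x) (vcurl ω x)) cube := by
    refine ContinuousOn.integrableOn_compact (isCompact_Icc (a := (0:R3)) (b := 1)) ?_
    refine Continuous.continuousOn ?_
    simp only [dot3]
    exact (((hutc 0).mul (hcurlωc 0)).add ((hutc 1).mul (hcurlωc 1))).add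
      ((hutc 2).mul (hcurlωc 2))
  have hInt3 : IntegrableOn (fun x => dot3 (u t x) (vgrad P x)) cube := by
    refine ContinuousOn.integrableOn_compact (isCompact_Icc (a := (0:R3)) (b := 1)) ?_
    refine Continuous.continuousOn ?_
    simp only [dot3, vgrad]
    exact (((hutc 0).mul (continuous_pd hPc 0)).add
      ((hutc 1).mul (continuous_pd hPc 1))).add ((hutc 2).mul (continuous_pd hPc 2))
  have hIntωω : IntegrableOn (fun x => dot3 (ω x) (ω x)) cube := by
    refine ContinuousOn.integrableOn_compact (isCompact_Icc (a := (0:R3)) (b := 1)) ?_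
    refine Continuous.continuousOn ?_
    simp only [dot3]
    exact (((hωc 0).mul (hωc 0)).add ((hωc 1).mul (hωc 1))).add ((hωc 2).mul (hωc 2))
  -- pointwise momentum identity dotted with u
  have key : ∀ x ∈ cube, dot3 (u t x) (dtv u t x)
      = dot3 (f t x) (u t x) - Re⁻¹ * dot3 (u t x) (vcurl ω x)
        - dot3 (u t x) (vgrad P x) := by
    intro x hx
    have h := hmom t x hx
    rw [← hωdef, ← hPdef] at h
    have h0 := congrFun h 0
    have h1 := congrFun h 1
    have h2 := congrFun h 2
    simp only [Pi.add_apply, Pi.sub_apply, Pi.smul_apply, smul_eq_mul] at h0 h1 h2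
    simp only [dot3, cross3, vgrad, vcurl, Matrix.cons_val_zero, Matrix.cons_val_one,
      Matrix.head_cons, Matrix.cons_val_two, Matrix.tail_cons] at h0 h1 h2 ⊢
    linear_combination (u t x 0) * h0 + (u t x 1) * h1 + (u t x 2) * h2
  -- pressure term vanishes
  have I2 : ∫ x in cube, dot3 (u t x) (vgrad P x) = 0 := by
    have hpt2 : ∀ x ∈ cube, dot3 (u t x) (vgrad P x)
        = vdiv (fun y => fun i => P y * u t y i) x := by
      intro x hx
      rw [vdiv_smulfield P (u t) x ((hPc.differentiable (by norm_num)) x)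
        (fun j => ((hcomp t j).differentiable (by norm_num)) x), hdiv t x hx]
      simp only [dot3, vgrad]
      ring
    rw [MeasureTheory.setIntegral_congr_fun (show MeasurableSet cube from measurableSet_Icc) hpt2]
    refine integral_vdiv_eq_zero _ ?_ ?_
    · exact contDiff_pi.2 fun i => hPc.mul ((hcomp t i).of_le one_le_two)
    · intro x hx i hfc
      have hP0 : P x = 0 := hbcp t x ⟨hx, ⟨i, hfc⟩⟩
      simp [hP0]
  -- curl-curl term
  have I3 : ∫ x in cube, dot3 (u t x) (vcurl ω x) = ∫ x in cube, dot3 (ω x) (ω x) := by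
    have hG : ContDiff ℝ 1 (fun y => cross3 (u t y) (ω y)) := by
      refine contDiff_pi.2 fun i => ?_
      fin_cases i <;>
        simp only [cross3, Matrix.cons_val_zero, Matrix.cons_val_one, Matrix.head_cons,
          Matrix.cons_val_two, Matrix.tail_cons, Fin.isValue] <;>
        exact (((hcomp t _).of_le one_le_two).mul (hωj _)).sub
          (((hcomp t _).of_le one_le_two).mul (hωj _))
    have hIntG : IntegrableOn (fun x => vdiv (fun y => cross3 (u t y) (ω y)) x) cube := by
      refine ContinuousOn.integrableOn_compact (isCompact_Icc (a := (0:R3)) (b := 1)) ?_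
      refine Continuous.continuousOn ?_
      unfold vdiv
      exact ((continuous_pd (contDiff_component hG 0) 0).add
        (continuous_pd (contDiff_component hG 1) 1)).add
        (continuous_pd (contDiff_component hG 2) 2)
    have hpt3 : ∀ x ∈ cube, dot3 (u t x) (vcurl ω x)
        = dot3 (ω x) (ω x) - vdiv (fun y => cross3 (u t y) (ω y)) x := by
      intro x _
      rw [vdiv_cross (u t) ω x (fun j => ((hcomp t j).differentiable (by norm_num)) x)
        (fun j => ((hωj j).differentiable (by norm_num)) x), ← hωdef]
      ring
    rw [MeasureTheory.setIntegral_congr_fun (show MeasurableSet cube from measurableSet_Icc) hpt3,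
      MeasureTheory.integral_sub hIntωω hIntG]
    have hz : ∫ x in cube, vdiv (fun y => cross3 (u t y) (ω y)) x = 0 := by
      refine integral_vdiv_eq_zero _ hG ?_
      intro x hx i hfc
      have hz1 : ∀ j : Fin 3, j ≠ i → u t x j = 0 := fun j hj => hbcu t x hx i hfc j hj
      fin_cases i
      · simp [cross3, hz1 1 (by decide), hz1 2 (by decide)]
      · simp [cross3, hz1 0 (by decide), hz1 2 (by decide)]
      · simp [cross3, hz1 0 (by decide), hz1 1 (by decide)]
    rw [hz, sub_zero]
  have hval : (1/2 : ℝ) * ∫ x in cube, F' t x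
      = (∫ x in cube, dot3 (f t x) (u t x)) - Re⁻¹ * ∫ x in cube, dot3 (ω x) (ω x) := by
    have e1 : ∫ x in cube, F' t x = ∫ x in cube, 2 * dot3 (u t x) (dtv u t x) := by
      refine MeasureTheory.integral_congr_ae (Filter.Eventually.of_forall fun x => ?_)
      simp only [hF'def]
      congr 1
      unfold dot3
      rw [hdtv_eq t x 0, hdtv_eq t x 1, hdtv_eq t x 2]
    have e2 : ∫ x in cube, 2 * dot3 (u t x) (dtv u t x)
        = 2 * ∫ x in cube, dot3 (u t x) (dtv u t x) := by
      exact MeasureTheory.integral_const_mul 2 _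
    have e3 : ∫ x in cube, dot3 (u t x) (dtv u t x)
        = (∫ x in cube, dot3 (f t x) (u t x))
          - Re⁻¹ * (∫ x in cube, dot3 (u t x) (vcurl ω x))
          - ∫ x in cube, dot3 (u t x) (vgrad P x) := by
      have hInt2' : IntegrableOn (fun x => Re⁻¹ * dot3 (u t x) (vcurl ω x)) cube :=
        hInt2.const_mul _
      have hInt12 : IntegrableOn
          (fun x => dot3 (f t x) (u t x) - Re⁻¹ * dot3 (u t x) (vcurl ω x)) cube :=
        hInt1.sub hInt2'
      rw [MeasureTheory.setIntegral_congr_fun (show MeasurableSet cube from measurableSet_Icc) key,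
        MeasureTheory.integral_sub hInt12 hInt3,
        MeasureTheory.integral_sub hInt1 hInt2',
        MeasureTheory.integral_const_mul]
    rw [e1, e2, e3, I2, I3]
    ring
  have hgoal := hderiv.const_mul (1/2 : ℝ)
  simp only [hωdef] at hval
  rw [hval] at hgoal
  exact hgoal
end
end

section
/- Let Re > 0, let u : ℝ × ℝ³ → ℝ³ be twice continuously differentiable (jointly in (t,x)), let p̃ : ℝ × ℝ³ → ℝ be continuously differentiable, and let f : ℝ × ℝ³ → ℝ³ be continuous. Suppose that for all t ∈ ℝ and x ∈ Ω = [0,1]³ the Lamb-form Navier–Stokes equations hold: ∂ₜu − u × (curl u) + Re⁻¹ curl(curl u) + ∇(½|u|² + p̃) = f and div u = 0, together with the boundary conditions u × n = 0 and ½|u|² + p̃ = 0 on ∂Ω for all t. Then for every t ∈ ℝ the fluid helicity H_f(t) := ∫_Ω u(t,x) · (curl u(t,·))(x) dx is differentiable in t with derivative H_f′(t) = −2 Re⁻¹ ∫_Ω (curl(curl u(t,·)))(x) · (curl u(t,·))(x) dx + 2 ∫_Ω f(t,x) · (curl u(t,·))(x) dx. -/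
open MeasureTheory

noncomputable section

namespace NSH

abbrev ee (i : Fin 3) : R3 := Pi.single i 1

abbrev prj (k : Fin 3) : R3 →L[ℝ] ℝ := ContinuousLinearMap.proj (R := ℝ) (φ := fun _ : Fin 3 => ℝ) k

lemma pd_eq {i : Fin 3} {f : R3 → ℝ} {x : R3} {D : R3 →L[ℝ] ℝ}
    (h : HasFDerivAt f D x) : pd i f x = D (ee i) := by
  rw [pd, h.fderiv]

variable {u : ℝ → R3 → R3}

lemma hasF_slice {F : ℝ × R3 → R3} (hF : Differentiable ℝ F) (t : ℝ) (x : R3) :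
    HasFDerivAt (fun y => F (t, y))
      ((fderiv ℝ F (t, x)).comp (ContinuousLinearMap.inr ℝ ℝ R3)) x :=
  (hF (t, x)).hasFDerivAt.comp x (hasFDerivAt_prodMk_right t x)

lemma hasF_u_comp (hu : ContDiff ℝ 2 (Function.uncurry u)) (t : ℝ) (x : R3) (k : Fin 3) :
    HasFDerivAt (fun y => u t y k)
      ((prj k).comp
        ((fderiv ℝ (Function.uncurry u) (t, x)).comp (ContinuousLinearMap.inr ℝ ℝ R3))) x :=
  ((prj k).hasFDerivAt).comp x (hasF_slice (hu.differentiable (by norm_num)) t x)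

lemma pd_u (hu : ContDiff ℝ 2 (Function.uncurry u)) (t : ℝ) (x : R3) (i k : Fin 3) :
    pd i (fun y => u t y k) x = fderiv ℝ (Function.uncurry u) (t, x) (0, ee i) k := by
  rw [pd_eq (hasF_u_comp hu t x k)]
  simp

lemma hasDerivAt_u_time (hu : ContDiff ℝ 2 (Function.uncurry u)) (t : ℝ) (x : R3) (k : Fin 3) :
    HasDerivAt (fun s => u s x k) (fderiv ℝ (Function.uncurry u) (t, x) (1, 0) k) t := by
  have h1 : HasFDerivAt (fun s : ℝ => ((s, x) : ℝ × R3)) (ContinuousLinearMap.inl ℝ ℝ R3) t :=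
    hasFDerivAt_prodMk_left t x
  have h2 := ((hu.differentiable (by norm_num)) (t, x)).hasFDerivAt.comp t h1
  have h3 := ((prj k).hasFDerivAt).comp t h2
  simpa [Function.comp_def] using h3.hasDerivAt

lemma dtv_eq (hu : ContDiff ℝ 2 (Function.uncurry u)) (t : ℝ) (x : R3) (k : Fin 3) :
    deriv (fun s => u s x k) t = fderiv ℝ (Function.uncurry u) (t, x) (1, 0) k :=
  (hasDerivAt_u_time hu t x k).deriv

lemma hasF_DU (hu : ContDiff ℝ 2 (Function.uncurry u)) (t : ℝ) (x : R3) (v : ℝ × R3) (k : Fin 3) :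
    HasFDerivAt (fun y => fderiv ℝ (Function.uncurry u) (t, y) v k)
      ((prj k).comp
        (((fderiv ℝ (fderiv ℝ (Function.uncurry u)) (t, x)).comp
          (ContinuousLinearMap.inr ℝ ℝ R3)).flip v)) x := by
  have hD : Differentiable ℝ (fderiv ℝ (Function.uncurry u)) :=
    (hu.fderiv_right (le_refl 2)).differentiable one_ne_zero
  have h1 : HasFDerivAt (fun y => fderiv ℝ (Function.uncurry u) (t, y))
      ((fderiv ℝ (fderiv ℝ (Function.uncurry u)) (t, x)).comp
        (ContinuousLinearMap.inr ℝ ℝ R3)) x :=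
    (hD (t, x)).hasFDerivAt.comp x (hasFDerivAt_prodMk_right t x)
  have h2 := h1.clm_apply (hasFDerivAt_const v x)
  have h3 := ((prj k).hasFDerivAt).comp x h2
  rw [ContinuousLinearMap.comp_zero, zero_add] at h3
  exact h3

lemma pd_DU (hu : ContDiff ℝ 2 (Function.uncurry u)) (t : ℝ) (x : R3) (i : Fin 3)
    (v : ℝ × R3) (k : Fin 3) :
    pd i (fun y => fderiv ℝ (Function.uncurry u) (t, y) v k) x
      = fderiv ℝ (fderiv ℝ (Function.uncurry u)) (t, x) (0, ee i) v k := by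
  rw [pd_eq (hasF_DU hu t x v k)]
  simp

lemma pd_DUsub (hu : ContDiff ℝ 2 (Function.uncurry u)) (t : ℝ) (x : R3) (i : Fin 3)
    (va vb : ℝ × R3) (a b : Fin 3) :
    pd i (fun y => fderiv ℝ (Function.uncurry u) (t, y) va a
        - fderiv ℝ (Function.uncurry u) (t, y) vb b) x
      = fderiv ℝ (fderiv ℝ (Function.uncurry u)) (t, x) (0, ee i) va a
        - fderiv ℝ (fderiv ℝ (Function.uncurry u)) (t, x) (0, ee i) vb b := by
  rw [pd_eq ((hasF_DU hu t x va a).fun_sub (hasF_DU hu t x vb b))]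
  simp

lemma D2_symm (hu : ContDiff ℝ 2 (Function.uncurry u)) (t : ℝ) (x : R3) (v w : ℝ × R3) :
    fderiv ℝ (fderiv ℝ (Function.uncurry u)) (t, x) v w
      = fderiv ℝ (fderiv ℝ (Function.uncurry u)) (t, x) w v :=
  (hu.contDiffAt.isSymmSndFDerivAt (by simp)) v w

lemma pd_dtv (hu : ContDiff ℝ 2 (Function.uncurry u)) (s : ℝ) (x : R3) (i k : Fin 3) :
    pd i (fun y => deriv (fun r => u r y k) s) x
      = fderiv ℝ (fderiv ℝ (Function.uncurry u)) (s, x) (0, ee i) (1, 0) k := by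
  have h : (fun y : R3 => deriv (fun r => u r y k) s)
      = fun y => fderiv ℝ (Function.uncurry u) (s, y) (1, 0) k :=
    funext fun y => dtv_eq hu s y k
  rw [h, pd_DU hu]

/-- the helicity integrand as a joint function -/
def GG (u : ℝ → R3 → R3) : ℝ × R3 → ℝ := fun p =>
  Function.uncurry u p 0 * (fderiv ℝ (Function.uncurry u) p (0, ee 1) 2
      - fderiv ℝ (Function.uncurry u) p (0, ee 2) 1)
    + Function.uncurry u p 1 * (fderiv ℝ (Function.uncurry u) p (0, ee 2) 0
      - fderiv ℝ (Function.uncurry u) p (0, ee 0) 2)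
    + Function.uncurry u p 2 * (fderiv ℝ (Function.uncurry u) p (0, ee 0) 1
      - fderiv ℝ (Function.uncurry u) p (0, ee 1) 0)

lemma GG_eq (hu : ContDiff ℝ 2 (Function.uncurry u)) (s : ℝ) (x : R3) :
    GG u (s, x) = dot3 (u s x) (vcurl (u s) x) := by
  simp [GG, dot3, vcurl, pd_u hu, Function.uncurry]

lemma hasF_Uk (hu : ContDiff ℝ 2 (Function.uncurry u)) (p : ℝ × R3) (k : Fin 3) :
    HasFDerivAt (fun q => Function.uncurry u q k)
      ((prj k).comp (fderiv ℝ (Function.uncurry u) p)) p :=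
  ((prj k).hasFDerivAt).comp p ((hu.differentiable (by norm_num)) p).hasFDerivAt

lemma hasF_Dvk (hu : ContDiff ℝ 2 (Function.uncurry u)) (p : ℝ × R3) (v : ℝ × R3) (k : Fin 3) :
    HasFDerivAt (fun q => fderiv ℝ (Function.uncurry u) q v k)
      ((prj k).comp ((fderiv ℝ (fderiv ℝ (Function.uncurry u)) p).flip v)) p := by
  have h2 := (((hu.fderiv_right (le_refl 2)).differentiable one_ne_zero p).hasFDerivAt).clm_apply
    (hasFDerivAt_const v p)
  have h3 := ((prj k).hasFDerivAt).comp p h2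
  rw [ContinuousLinearMap.comp_zero, zero_add] at h3
  exact h3

lemma GG_contDiff (hu : ContDiff ℝ 2 (Function.uncurry u)) : ContDiff ℝ 1 (GG u) := by
  have hU : ∀ k : Fin 3, ContDiff ℝ 1 fun p => Function.uncurry u p k := fun k =>
    ((ContinuousLinearMap.proj (R := ℝ) (φ := fun _ : Fin 3 => ℝ) k).contDiff).comp
      (hu.of_le (by norm_num))
  have hD : ∀ (v : ℝ × R3) (k : Fin 3),
      ContDiff ℝ 1 fun p => fderiv ℝ (Function.uncurry u) p v k := fun v k =>
    ((ContinuousLinearMap.proj (R := ℝ) (φ := fun _ : Fin 3 => ℝ) k).contDiff).comp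
      ((hu.fderiv_right (le_refl 2)).clm_apply contDiff_const)
  exact (((hU 0).mul ((hD _ 2).sub (hD _ 1))).add
    ((hU 1).mul ((hD _ 0).sub (hD _ 2)))).add
    ((hU 2).mul ((hD _ 1).sub (hD _ 0)))

lemma GG_hasDerivAt (hu : ContDiff ℝ 2 (Function.uncurry u)) (s : ℝ) (x : R3) :
    HasDerivAt (fun r => GG u (r, x)) (fderiv ℝ (GG u) (s, x) (1, 0)) s := by
  have h := (((GG_contDiff hu).differentiable one_ne_zero (s, x)).hasFDerivAt.comp s
    (hasFDerivAt_prodMk_left s x)).hasDerivAt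
  simpa [Function.comp_def] using h

lemma GG_t_eq (hu : ContDiff ℝ 2 (Function.uncurry u)) (s : ℝ) (x : R3) :
    fderiv ℝ (GG u) (s, x) (1, 0)
      = dot3 (dtv u s x) (vcurl (u s) x) + dot3 (u s x) (vcurl (dtv u s) x) := by
  have h : HasFDerivAt (GG u) _ (s, x) :=
    (((hasF_Uk hu (s,x) 0).mul ((hasF_Dvk hu (s,x) (0, ee 1) 2).sub
        (hasF_Dvk hu (s,x) (0, ee 2) 1))).add
      ((hasF_Uk hu (s,x) 1).mul ((hasF_Dvk hu (s,x) (0, ee 2) 0).sub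
        (hasF_Dvk hu (s,x) (0, ee 0) 2)))).add
      ((hasF_Uk hu (s,x) 2).mul ((hasF_Dvk hu (s,x) (0, ee 0) 1).sub
        (hasF_Dvk hu (s,x) (0, ee 1) 0)))
  rw [h.fderiv]
  have hsym : ∀ (i k : Fin 3),
      fderiv ℝ (fderiv ℝ (Function.uncurry u)) (s, x) (1, 0) (0, ee i) k
        = fderiv ℝ (fderiv ℝ (Function.uncurry u)) (s, x) (0, ee i) (1, 0) k :=
    fun i k => congrFun (D2_symm hu s x (1, 0) (0, ee i)) k
  simp only [dot3, vcurl, dtv, Matrix.cons_val_zero, Matrix.cons_val_one, Matrix.head_cons,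
    Matrix.cons_val_two, Matrix.tail_cons, pd_u hu, pd_dtv hu, dtv_eq hu, pd_DU hu]
  simp only [ContinuousLinearMap.add_apply, ContinuousLinearMap.coe_comp', Function.comp_apply,
    ContinuousLinearMap.smul_apply, ContinuousLinearMap.coe_sub', Pi.sub_apply,
    ContinuousLinearMap.flip_apply, ContinuousLinearMap.proj_apply, smul_eq_mul,
    Pi.add_apply, Pi.smul_apply, Function.uncurry]
  simp only [hsym]
  ring

lemma pd_cr (hu : ContDiff ℝ 2 (Function.uncurry u)) (t : ℝ) (x : R3) (i : Fin 3)
    (j1 k1 j2 k2 : Fin 3) :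
    pd i (fun y => fderiv ℝ (Function.uncurry u) (t, y) (1, 0) j1 * u t y k1
        - fderiv ℝ (Function.uncurry u) (t, y) (1, 0) j2 * u t y k2) x
      = (fderiv ℝ (fderiv ℝ (Function.uncurry u)) (t, x) (0, ee i) (1, 0) j1 * u t x k1
          + fderiv ℝ (Function.uncurry u) (t, x) (1, 0) j1
            * fderiv ℝ (Function.uncurry u) (t, x) (0, ee i) k1)
        - (fderiv ℝ (fderiv ℝ (Function.uncurry u)) (t, x) (0, ee i) (1, 0) j2 * u t x k2
          + fderiv ℝ (Function.uncurry u) (t, x) (1, 0) j2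
            * fderiv ℝ (Function.uncurry u) (t, x) (0, ee i) k2) := by
  rw [pd_eq (((hasF_DU hu t x (1, 0) j1).fun_mul (hasF_u_comp hu t x k1)).fun_sub
    ((hasF_DU hu t x (1, 0) j2).fun_mul (hasF_u_comp hu t x k2)))]
  simp only [ContinuousLinearMap.coe_sub', Pi.sub_apply, ContinuousLinearMap.add_apply,
    ContinuousLinearMap.smul_apply, ContinuousLinearMap.coe_comp', Function.comp_apply,
    ContinuousLinearMap.flip_apply, ContinuousLinearMap.inr_apply,
    ContinuousLinearMap.proj_apply, smul_eq_mul]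
  ring

lemma div_cross (hu : ContDiff ℝ 2 (Function.uncurry u)) (t : ℝ) (x : R3) :
    vdiv (fun y => cross3 (dtv u t y) (u t y)) x
      = dot3 (u t x) (vcurl (dtv u t) x) - dot3 (dtv u t x) (vcurl (u t) x) := by
  have c0 : (fun y => cross3 (dtv u t y) (u t y) 0)
      = fun y => fderiv ℝ (Function.uncurry u) (t, y) (1, 0) 1 * u t y 2
        - fderiv ℝ (Function.uncurry u) (t, y) (1, 0) 2 * u t y 1 := by
    funext y; simp [cross3, dtv, dtv_eq hu]
  have c1 : (fun y => cross3 (dtv u t y) (u t y) 1)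
      = fun y => fderiv ℝ (Function.uncurry u) (t, y) (1, 0) 2 * u t y 0
        - fderiv ℝ (Function.uncurry u) (t, y) (1, 0) 0 * u t y 2 := by
    funext y; simp [cross3, dtv, dtv_eq hu]
  have c2 : (fun y => cross3 (dtv u t y) (u t y) 2)
      = fun y => fderiv ℝ (Function.uncurry u) (t, y) (1, 0) 0 * u t y 1
        - fderiv ℝ (Function.uncurry u) (t, y) (1, 0) 1 * u t y 0 := by
    funext y; simp [cross3, dtv, dtv_eq hu]
  simp only [vdiv]
  rw [c0, c1, c2, pd_cr hu, pd_cr hu, pd_cr hu]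
  simp only [dot3, vcurl, dtv, Matrix.cons_val_zero, Matrix.cons_val_one, Matrix.head_cons,
    Matrix.cons_val_two, Matrix.tail_cons, pd_u hu, pd_dtv hu, dtv_eq hu, pd_DU hu]
  ring

lemma div_q_curl (hu : ContDiff ℝ 2 (Function.uncurry u)) (t : ℝ) (x : R3)
    {q : R3 → ℝ} {Dq : R3 →L[ℝ] ℝ} (hq : HasFDerivAt q Dq x) :
    vdiv (fun y i => q y * vcurl (u t) y i) x
      = Dq (ee 0) * vcurl (u t) x 0 + Dq (ee 1) * vcurl (u t) x 1
        + Dq (ee 2) * vcurl (u t) x 2 := by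
  have c0 : (fun y => q y * vcurl (u t) y 0)
      = fun y => q y * (fderiv ℝ (Function.uncurry u) (t, y) (0, ee 1) 2
        - fderiv ℝ (Function.uncurry u) (t, y) (0, ee 2) 1) := by
    funext y; simp [vcurl, pd_u hu]
  have c1 : (fun y => q y * vcurl (u t) y 1)
      = fun y => q y * (fderiv ℝ (Function.uncurry u) (t, y) (0, ee 2) 0
        - fderiv ℝ (Function.uncurry u) (t, y) (0, ee 0) 2) := by
    funext y; simp [vcurl, pd_u hu]
  have c2 : (fun y => q y * vcurl (u t) y 2)
      = fun y => q y * (fderiv ℝ (Function.uncurry u) (t, y) (0, ee 0) 1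
        - fderiv ℝ (Function.uncurry u) (t, y) (0, ee 1) 0) := by
    funext y; simp [vcurl, pd_u hu]
  have h01 : ∀ k : Fin 3, fderiv ℝ (fderiv ℝ (Function.uncurry u)) (t, x) (0, ee 1) (0, ee 0) k
      = fderiv ℝ (fderiv ℝ (Function.uncurry u)) (t, x) (0, ee 0) (0, ee 1) k :=
    fun k => congrFun (D2_symm hu t x (0, ee 1) (0, ee 0)) k
  have h02 : ∀ k : Fin 3, fderiv ℝ (fderiv ℝ (Function.uncurry u)) (t, x) (0, ee 2) (0, ee 0) k
      = fderiv ℝ (fderiv ℝ (Function.uncurry u)) (t, x) (0, ee 0) (0, ee 2) k :=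
    fun k => congrFun (D2_symm hu t x (0, ee 2) (0, ee 0)) k
  have h12 : ∀ k : Fin 3, fderiv ℝ (fderiv ℝ (Function.uncurry u)) (t, x) (0, ee 2) (0, ee 1) k
      = fderiv ℝ (fderiv ℝ (Function.uncurry u)) (t, x) (0, ee 1) (0, ee 2) k :=
    fun k => congrFun (D2_symm hu t x (0, ee 2) (0, ee 1)) k
  simp only [vdiv]
  rw [c0, c1, c2,
    pd_eq (hq.fun_mul ((hasF_DU hu t x (0, ee 1) 2).fun_sub (hasF_DU hu t x (0, ee 2) 1))),
    pd_eq (hq.fun_mul ((hasF_DU hu t x (0, ee 2) 0).fun_sub (hasF_DU hu t x (0, ee 0) 2))),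
    pd_eq (hq.fun_mul ((hasF_DU hu t x (0, ee 0) 1).fun_sub (hasF_DU hu t x (0, ee 1) 0)))]
  simp only [vcurl, Matrix.cons_val_zero, Matrix.cons_val_one, Matrix.head_cons,
    Matrix.cons_val_two, Matrix.tail_cons, pd_u hu,
    ContinuousLinearMap.add_apply, ContinuousLinearMap.smul_apply,
    ContinuousLinearMap.coe_sub', Pi.sub_apply, ContinuousLinearMap.coe_comp',
    Function.comp_apply, ContinuousLinearMap.flip_apply, ContinuousLinearMap.inr_apply,
    ContinuousLinearMap.proj_apply, smul_eq_mul]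
  simp only [h01, h02, h12]
  ring

lemma vdiv_eq_sum {g : R3 → R3} {x : R3} (hg : DifferentiableAt ℝ g x) :
    vdiv g x = ∑ i : Fin 3, fderiv ℝ g x (ee i) i := by
  have h : ∀ k : Fin 3, pd k (fun y => g y k) x = fderiv ℝ g x (ee k) k := by
    intro k
    have h2 : HasFDerivAt (fun y => g y k) ((prj k).comp (fderiv ℝ g x)) x :=
      ((prj k).hasFDerivAt).comp x hg.hasFDerivAt
    rw [pd_eq h2]; simp
  simp only [vdiv, Fin.sum_univ_three, h]

lemma cube_compact : IsCompact cube := isCompact_Icc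

lemma integral_vdiv_eq_zero {g : R3 → R3} (hg : Differentiable ℝ g)
    (hcont : ContinuousOn (fun x => vdiv g x) cube)
    (hbc : ∀ x ∈ cube, ∀ i : Fin 3, onFace x i → g x i = 0) :
    ∫ x in cube, vdiv g x = 0 := by
  have hle : (0 : R3) ≤ 1 := fun i => by norm_num
  have hsum : (fun x : R3 => ∑ i : Fin 3, fderiv ℝ g x (ee i) i) = fun x => vdiv g x :=
    funext fun x => (vdiv_eq_sum (hg x)).symm
  have Hi : MeasureTheory.IntegrableOn
      (fun x : R3 => ∑ i : Fin 3, fderiv ℝ g x (ee i) i) (Set.Icc 0 1) := by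
    rw [hsum]
    exact hcont.integrableOn_compact cube_compact
  have key := MeasureTheory.integral_divergence_of_hasFDerivAt_off_countable (n := 2)
    (0 : R3) 1 hle g (fun x => fderiv ℝ g x) ∅ Set.countable_empty
    hg.continuous.continuousOn
    (fun x _ => (hg x).hasFDerivAt) Hi
  have hface : ∀ (i : Fin 3) (c : ℝ), c = 0 ∨ c = 1 →
      (∫ x in Set.Icc ((0 : R3) ∘ i.succAbove) ((1 : R3) ∘ i.succAbove),
        g (i.insertNth c x) i) = 0 := by
    intro i c hc
    rw [MeasureTheory.setIntegral_congr_fun measurableSet_Icc (g := fun _ => (0 : ℝ)),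
      MeasureTheory.integral_zero]
    intro x hx
    have hc01 : (0:ℝ) ≤ c ∧ c ≤ 1 := by rcases hc with h | h <;> simp [h]
    have hmem : i.insertNth c x ∈ cube := by
      rw [cube, Set.mem_Icc]
      constructor
      · intro j
        induction j using Fin.succAboveCases (i := i) with
        | x => simpa [Fin.insertNth_apply_same] using hc01.1
        | p j => simpa [Fin.insertNth_apply_succAbove] using hx.1 j
      · intro j
        induction j using Fin.succAboveCases (i := i) with
        | x => simpa [Fin.insertNth_apply_same] using hc01.2
        | p j => simpa [Fin.insertNth_apply_succAbove] using hx.2 j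
    exact hbc _ hmem i (by simpa [onFace, Fin.insertNth_apply_same] using hc)
  have hcg : ∫ x in cube, vdiv g x
      = ∫ x in Set.Icc (0 : R3) 1, ∑ i : Fin 3, fderiv ℝ g x (ee i) i := by
    rw [hsum]; rfl
  rw [hcg, key, Finset.sum_eq_zero]
  intro i _
  rw [hface i ((1:R3) i) (Or.inr rfl), hface i ((0:R3) i) (Or.inl rfl), sub_zero]

end NSH

/-- Helicity identity for the Lamb-form Navier–Stokes equations on the unit cube:
(d/dt) H_f = −2 Re⁻¹ ∫ curl(curl u) · (curl u) + 2 ∫ f · (curl u). -/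
theorem navier_stokes_helicity_identity (Re : ℝ) (hRe : 0 < Re)
    (u : ℝ → R3 → R3) (pt : ℝ → R3 → ℝ) (f : ℝ → R3 → R3)
    (hu : ContDiff ℝ 2 (Function.uncurry u))
    (hp : ContDiff ℝ 1 (Function.uncurry pt))
    (hf : Continuous (Function.uncurry f))
    (hmom : ∀ t : ℝ, ∀ x ∈ cube,
      dtv u t x - cross3 (u t x) (vcurl (u t) x) + Re⁻¹ • vcurl (vcurl (u t)) x
        + vgrad (fun y => (1 / 2) * dot3 (u t y) (u t y) + pt t y) x = f t x)
    (hdiv : ∀ t : ℝ, ∀ x ∈ cube, vdiv (u t) x = 0)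
    (hbcu : ∀ t : ℝ, TangentialBC (u t))
    (hbcp : ∀ t : ℝ, ∀ x : R3, onBdry x →
      (1 / 2) * dot3 (u t x) (u t x) + pt t x = 0) :
    ∀ t : ℝ,
      HasDerivAt (fun s => ∫ x in cube, dot3 (u s x) (vcurl (u s) x))
        (-2 * Re⁻¹ * (∫ x in cube, dot3 (vcurl (vcurl (u t)) x) (vcurl (u t) x))
          + 2 * ∫ x in cube, dot3 (f t x) (vcurl (u t) x)) t := by

  intro t
  classical
  have cubeM : MeasurableSet cube := measurableSet_Icc
  set q : R3 → ℝ := fun y => (1 / 2) * dot3 (u t y) (u t y) + pt t y with hqdef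
  have sliceC : Continuous fun x : R3 => ((t, x) : ℝ × R3) :=
    continuous_const.prodMk continuous_id
  have sliceCD : ContDiff ℝ 1 fun x : R3 => ((t, x) : ℝ × R3) :=
    contDiff_const.prodMk contDiff_id
  have h12 : (1 : WithTop ℕ∞) + 1 ≤ 2 := by norm_num
  have h01 : (0 : WithTop ℕ∞) + 1 ≤ 1 := by norm_num
  have contD : Continuous (fderiv ℝ (Function.uncurry u)) := (hu.fderiv_right h12).continuous
  have contD2 : Continuous (fderiv ℝ (fderiv ℝ (Function.uncurry u))) :=
    ((hu.fderiv_right (le_refl 2)).fderiv_right h01).continuous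
  have catU : ∀ k : Fin 3, Continuous fun x => u t x k := fun k =>
    (continuous_apply k).comp (hu.continuous.comp sliceC)
  have catD : ∀ (v : ℝ × R3) (k : Fin 3),
      Continuous fun x => fderiv ℝ (Function.uncurry u) (t, x) v k := fun v k =>
    (continuous_apply k).comp ((contD.comp sliceC).clm_apply continuous_const)
  have catD2 : ∀ (v w : ℝ × R3) (k : Fin 3),
      Continuous fun x => fderiv ℝ (fderiv ℝ (Function.uncurry u)) (t, x) v w k := fun v w k =>
    (continuous_apply k).comp
      (((contD2.comp sliceC).clm_apply continuous_const).clm_apply continuous_const)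
  have catF : ∀ k : Fin 3, Continuous fun x => f t x k := fun k =>
    (continuous_apply k).comp (hf.comp sliceC)
  have cU1 : ∀ k : Fin 3, ContDiff ℝ 1 fun y => u t y k := fun k =>
    ((ContinuousLinearMap.proj (R := ℝ) (φ := fun _ : Fin 3 => ℝ) k).contDiff).comp
      ((hu.of_le (by norm_num)).comp sliceCD)
  have hqC1 : ContDiff ℝ 1 q := by
    rw [hqdef]
    simp only [dot3]
    exact (contDiff_const.mul ((((cU1 0).mul (cU1 0)).add ((cU1 1).mul (cU1 1))).add
      ((cU1 2).mul (cU1 2)))).add (hp.comp sliceCD)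
  have hqdiff : Differentiable ℝ q := hqC1.differentiable one_ne_zero
  have catGq : ∀ i : Fin 3, Continuous fun x => fderiv ℝ q x (NSH.ee i) := fun i =>
    ((hqC1.fderiv_right h01).continuous).clm_apply continuous_const
  -- continuity of the various integrands
  have cAw : Continuous fun x => dot3 (dtv u t x) (vcurl (u t) x) := by
    have e : (fun x => dot3 (dtv u t x) (vcurl (u t) x)) = fun x =>
        fderiv ℝ (Function.uncurry u) (t, x) (1, 0) 0 *
          (fderiv ℝ (Function.uncurry u) (t, x) (0, NSH.ee 1) 2
            - fderiv ℝ (Function.uncurry u) (t, x) (0, NSH.ee 2) 1)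
        + fderiv ℝ (Function.uncurry u) (t, x) (1, 0) 1 *
          (fderiv ℝ (Function.uncurry u) (t, x) (0, NSH.ee 2) 0
            - fderiv ℝ (Function.uncurry u) (t, x) (0, NSH.ee 0) 2)
        + fderiv ℝ (Function.uncurry u) (t, x) (1, 0) 2 *
          (fderiv ℝ (Function.uncurry u) (t, x) (0, NSH.ee 0) 1
            - fderiv ℝ (Function.uncurry u) (t, x) (0, NSH.ee 1) 0) := by
      funext x
      simp [dot3, vcurl, dtv, NSH.pd_u hu, NSH.dtv_eq hu]
      try ring
    rw [e]
    exact (((catD _ _).mul ((catD _ _).sub (catD _ _))).add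
      ((catD _ _).mul ((catD _ _).sub (catD _ _)))).add
      ((catD _ _).mul ((catD _ _).sub (catD _ _)))
  have cuCA : Continuous fun x => dot3 (u t x) (vcurl (dtv u t) x) := by
    have e : (fun x => dot3 (u t x) (vcurl (dtv u t) x)) = fun x =>
        u t x 0 * (fderiv ℝ (fderiv ℝ (Function.uncurry u)) (t, x) (0, NSH.ee 1) (1, 0) 2
          - fderiv ℝ (fderiv ℝ (Function.uncurry u)) (t, x) (0, NSH.ee 2) (1, 0) 1)
        + u t x 1 * (fderiv ℝ (fderiv ℝ (Function.uncurry u)) (t, x) (0, NSH.ee 2) (1, 0) 0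
          - fderiv ℝ (fderiv ℝ (Function.uncurry u)) (t, x) (0, NSH.ee 0) (1, 0) 2)
        + u t x 2 * (fderiv ℝ (fderiv ℝ (Function.uncurry u)) (t, x) (0, NSH.ee 0) (1, 0) 1
          - fderiv ℝ (fderiv ℝ (Function.uncurry u)) (t, x) (0, NSH.ee 1) (1, 0) 0) := by
      funext x
      simp [dot3, vcurl, dtv, NSH.pd_dtv hu]
      try ring
    rw [e]
    exact (((catU _).mul ((catD2 _ _ _).sub (catD2 _ _ _))).add
      ((catU _).mul ((catD2 _ _ _).sub (catD2 _ _ _)))).add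
      ((catU _).mul ((catD2 _ _ _).sub (catD2 _ _ _)))
  have cfw : Continuous fun x => dot3 (f t x) (vcurl (u t) x) := by
    have e : (fun x => dot3 (f t x) (vcurl (u t) x)) = fun x =>
        f t x 0 * (fderiv ℝ (Function.uncurry u) (t, x) (0, NSH.ee 1) 2
          - fderiv ℝ (Function.uncurry u) (t, x) (0, NSH.ee 2) 1)
        + f t x 1 * (fderiv ℝ (Function.uncurry u) (t, x) (0, NSH.ee 2) 0
          - fderiv ℝ (Function.uncurry u) (t, x) (0, NSH.ee 0) 2)
        + f t x 2 * (fderiv ℝ (Function.uncurry u) (t, x) (0, NSH.ee 0) 1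
          - fderiv ℝ (Function.uncurry u) (t, x) (0, NSH.ee 1) 0) := by
      funext x
      simp [dot3, vcurl, NSH.pd_u hu]
      try ring
    rw [e]
    exact (((catF _).mul ((catD _ _).sub (catD _ _))).add
      ((catF _).mul ((catD _ _).sub (catD _ _)))).add
      ((catF _).mul ((catD _ _).sub (catD _ _)))
  have cccw : Continuous fun x => dot3 (vcurl (vcurl (u t)) x) (vcurl (u t) x) := by
    have e : (fun x => dot3 (vcurl (vcurl (u t)) x) (vcurl (u t) x)) = fun x =>
        (fderiv ℝ (fderiv ℝ (Function.uncurry u)) (t, x) (0, NSH.ee 1) (0, NSH.ee 0) 1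
          - fderiv ℝ (fderiv ℝ (Function.uncurry u)) (t, x) (0, NSH.ee 1) (0, NSH.ee 1) 0
          - (fderiv ℝ (fderiv ℝ (Function.uncurry u)) (t, x) (0, NSH.ee 2) (0, NSH.ee 2) 0
          - fderiv ℝ (fderiv ℝ (Function.uncurry u)) (t, x) (0, NSH.ee 2) (0, NSH.ee 0) 2)) *
          (fderiv ℝ (Function.uncurry u) (t, x) (0, NSH.ee 1) 2
            - fderiv ℝ (Function.uncurry u) (t, x) (0, NSH.ee 2) 1)
        + (fderiv ℝ (fderiv ℝ (Function.uncurry u)) (t, x) (0, NSH.ee 2) (0, NSH.ee 1) 2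
          - fderiv ℝ (fderiv ℝ (Function.uncurry u)) (t, x) (0, NSH.ee 2) (0, NSH.ee 2) 1
          - (fderiv ℝ (fderiv ℝ (Function.uncurry u)) (t, x) (0, NSH.ee 0) (0, NSH.ee 0) 1
          - fderiv ℝ (fderiv ℝ (Function.uncurry u)) (t, x) (0, NSH.ee 0) (0, NSH.ee 1) 0)) *
          (fderiv ℝ (Function.uncurry u) (t, x) (0, NSH.ee 2) 0
            - fderiv ℝ (Function.uncurry u) (t, x) (0, NSH.ee 0) 2)
        + (fderiv ℝ (fderiv ℝ (Function.uncurry u)) (t, x) (0, NSH.ee 0) (0, NSH.ee 2) 0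
          - fderiv ℝ (fderiv ℝ (Function.uncurry u)) (t, x) (0, NSH.ee 0) (0, NSH.ee 0) 2
          - (fderiv ℝ (fderiv ℝ (Function.uncurry u)) (t, x) (0, NSH.ee 1) (0, NSH.ee 1) 2
          - fderiv ℝ (fderiv ℝ (Function.uncurry u)) (t, x) (0, NSH.ee 1) (0, NSH.ee 2) 1)) *
          (fderiv ℝ (Function.uncurry u) (t, x) (0, NSH.ee 0) 1
            - fderiv ℝ (Function.uncurry u) (t, x) (0, NSH.ee 1) 0) := by
      funext x
      simp [dot3, vcurl, NSH.pd_u hu, NSH.pd_DUsub hu]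
      try ring
    rw [e]
    have A1 : Continuous fun x => fderiv ℝ (fderiv ℝ (Function.uncurry u)) (t, x) (0, NSH.ee 1) (0, NSH.ee 0) 1 - fderiv ℝ (fderiv ℝ (Function.uncurry u)) (t, x) (0, NSH.ee 1) (0, NSH.ee 1) 0 - (fderiv ℝ (fderiv ℝ (Function.uncurry u)) (t, x) (0, NSH.ee 2) (0, NSH.ee 2) 0 - fderiv ℝ (fderiv ℝ (Function.uncurry u)) (t, x) (0, NSH.ee 2) (0, NSH.ee 0) 2) := ((catD2 _ _ _).sub (catD2 _ _ _)).sub ((catD2 _ _ _).sub (catD2 _ _ _))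
    have A2 : Continuous fun x => fderiv ℝ (fderiv ℝ (Function.uncurry u)) (t, x) (0, NSH.ee 2) (0, NSH.ee 1) 2 - fderiv ℝ (fderiv ℝ (Function.uncurry u)) (t, x) (0, NSH.ee 2) (0, NSH.ee 2) 1 - (fderiv ℝ (fderiv ℝ (Function.uncurry u)) (t, x) (0, NSH.ee 0) (0, NSH.ee 0) 1 - fderiv ℝ (fderiv ℝ (Function.uncurry u)) (t, x) (0, NSH.ee 0) (0, NSH.ee 1) 0) := ((catD2 _ _ _).sub (catD2 _ _ _)).sub ((catD2 _ _ _).sub (catD2 _ _ _))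
    have A3 : Continuous fun x => fderiv ℝ (fderiv ℝ (Function.uncurry u)) (t, x) (0, NSH.ee 0) (0, NSH.ee 2) 0 - fderiv ℝ (fderiv ℝ (Function.uncurry u)) (t, x) (0, NSH.ee 0) (0, NSH.ee 0) 2 - (fderiv ℝ (fderiv ℝ (Function.uncurry u)) (t, x) (0, NSH.ee 1) (0, NSH.ee 1) 2 - fderiv ℝ (fderiv ℝ (Function.uncurry u)) (t, x) (0, NSH.ee 1) (0, NSH.ee 2) 1) := ((catD2 _ _ _).sub (catD2 _ _ _)).sub ((catD2 _ _ _).sub (catD2 _ _ _))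
    exact ((A1.mul ((catD _ _).sub (catD _ _))).add (A2.mul ((catD _ _).sub (catD _ _)))).add (A3.mul ((catD _ _).sub (catD _ _)))
  have cgw : Continuous fun x => dot3 (vgrad q x) (vcurl (u t) x) := by
    have e : (fun x => dot3 (vgrad q x) (vcurl (u t) x)) = fun x =>
        fderiv ℝ q x (NSH.ee 0) * (fderiv ℝ (Function.uncurry u) (t, x) (0, NSH.ee 1) 2
          - fderiv ℝ (Function.uncurry u) (t, x) (0, NSH.ee 2) 1)
        + fderiv ℝ q x (NSH.ee 1) * (fderiv ℝ (Function.uncurry u) (t, x) (0, NSH.ee 2) 0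
          - fderiv ℝ (Function.uncurry u) (t, x) (0, NSH.ee 0) 2)
        + fderiv ℝ q x (NSH.ee 2) * (fderiv ℝ (Function.uncurry u) (t, x) (0, NSH.ee 0) 1
          - fderiv ℝ (Function.uncurry u) (t, x) (0, NSH.ee 1) 0) := by
      funext x
      simp only [dot3]
      simp [vcurl, NSH.pd_u hu]
      simp only [vgrad, pd, NSH.ee]
      try ring
    rw [e]
    exact (((catGq _).mul ((catD _ _).sub (catD _ _))).add
      ((catGq _).mul ((catD _ _).sub (catD _ _)))).add
      ((catGq _).mul ((catD _ _).sub (catD _ _)))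
  have intOn : ∀ {φ : R3 → ℝ}, Continuous φ → MeasureTheory.IntegrableOn φ cube := fun hφ =>
    hφ.continuousOn.integrableOn_compact NSH.cube_compact
  have hIAw := intOn cAw
  have hIuCA := intOn cuCA
  have hIfw := intOn cfw
  have hIccw := intOn cccw
  have hIgw := intOn cgw
  -- Step A : integration by parts for the cross term
  have hdiffg1 : Differentiable ℝ (fun y => cross3 (dtv u t y) (u t y)) := by
    intro x
    have hc0 : DifferentiableAt ℝ (fun y => cross3 (dtv u t y) (u t y) 0) x := by
      rw [show (fun y => cross3 (dtv u t y) (u t y) 0)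
          = fun y => fderiv ℝ (Function.uncurry u) (t, y) (1, 0) 1 * u t y 2
            - fderiv ℝ (Function.uncurry u) (t, y) (1, 0) 2 * u t y 1 from
        funext fun y => by simp [cross3, dtv, NSH.dtv_eq hu]]
      exact (((NSH.hasF_DU hu t x (1, 0) 1).mul (NSH.hasF_u_comp hu t x 2)).sub
        ((NSH.hasF_DU hu t x (1, 0) 2).mul (NSH.hasF_u_comp hu t x 1))).differentiableAt
    have hc1 : DifferentiableAt ℝ (fun y => cross3 (dtv u t y) (u t y) 1) x := by
      rw [show (fun y => cross3 (dtv u t y) (u t y) 1)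
          = fun y => fderiv ℝ (Function.uncurry u) (t, y) (1, 0) 2 * u t y 0
            - fderiv ℝ (Function.uncurry u) (t, y) (1, 0) 0 * u t y 2 from
        funext fun y => by simp [cross3, dtv, NSH.dtv_eq hu]]
      exact (((NSH.hasF_DU hu t x (1, 0) 2).mul (NSH.hasF_u_comp hu t x 0)).sub
        ((NSH.hasF_DU hu t x (1, 0) 0).mul (NSH.hasF_u_comp hu t x 2))).differentiableAt
    have hc2 : DifferentiableAt ℝ (fun y => cross3 (dtv u t y) (u t y) 2) x := by
      rw [show (fun y => cross3 (dtv u t y) (u t y) 2)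
          = fun y => fderiv ℝ (Function.uncurry u) (t, y) (1, 0) 0 * u t y 1
            - fderiv ℝ (Function.uncurry u) (t, y) (1, 0) 1 * u t y 0 from
        funext fun y => by simp [cross3, dtv, NSH.dtv_eq hu]]
      exact (((NSH.hasF_DU hu t x (1, 0) 0).mul (NSH.hasF_u_comp hu t x 1)).sub
        ((NSH.hasF_DU hu t x (1, 0) 1).mul (NSH.hasF_u_comp hu t x 0))).differentiableAt
    rw [differentiableAt_pi]
    intro i
    fin_cases i
    · exact hc0
    · exact hc1
    · exact hc2
  have keyA : ∫ x in cube, (dot3 (u t x) (vcurl (dtv u t) x)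
      - dot3 (dtv u t x) (vcurl (u t) x)) = 0 := by
    have hz := NSH.integral_vdiv_eq_zero (g := fun y => cross3 (dtv u t y) (u t y)) hdiffg1
      (by
        have e : (fun x => vdiv (fun y => cross3 (dtv u t y) (u t y)) x)
            = fun x => dot3 (u t x) (vcurl (dtv u t) x) - dot3 (dtv u t x) (vcurl (u t) x) :=
          funext fun x => NSH.div_cross hu t x
        rw [e]
        exact (cuCA.sub cAw).continuousOn)
      (by
        intro x hx i hif
        fin_cases i
        · simp [cross3, hbcu t x hx _ hif 1 (by decide), hbcu t x hx _ hif 2 (by decide)]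
        · simp [cross3, hbcu t x hx _ hif 0 (by decide), hbcu t x hx _ hif 2 (by decide)]
        · simp [cross3, hbcu t x hx _ hif 0 (by decide), hbcu t x hx _ hif 1 (by decide)])
    simpa only [NSH.div_cross hu] using hz
  have hsplitA : ∫ x in cube, dot3 (u t x) (vcurl (dtv u t) x)
      = ∫ x in cube, dot3 (dtv u t x) (vcurl (u t) x) := by
    have h := MeasureTheory.integral_sub hIuCA hIAw
    rw [keyA] at h
    linarith [h]
  -- Step B : pressure term integrates to zero
  have hptw : ∀ x : R3, vdiv (fun y i => q y * vcurl (u t) y i) x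
      = dot3 (vgrad q x) (vcurl (u t) x) := by
    intro x
    rw [NSH.div_q_curl hu t x (hqdiff x).hasFDerivAt]
    simp [dot3, vgrad, pd]
  have hdiffh2 : Differentiable ℝ (fun y i => q y * vcurl (u t) y i) := by
    intro x
    have hc0 : DifferentiableAt ℝ (fun y => q y * vcurl (u t) y 0) x := by
      rw [show (fun y => q y * vcurl (u t) y 0)
          = fun y => q y * (fderiv ℝ (Function.uncurry u) (t, y) (0, NSH.ee 1) 2
            - fderiv ℝ (Function.uncurry u) (t, y) (0, NSH.ee 2) 1) from
        funext fun y => by simp [vcurl, NSH.pd_u hu]]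
      exact ((hqdiff x).hasFDerivAt.mul
        ((NSH.hasF_DU hu t x (0, NSH.ee 1) 2).sub
          (NSH.hasF_DU hu t x (0, NSH.ee 2) 1))).differentiableAt
    have hc1 : DifferentiableAt ℝ (fun y => q y * vcurl (u t) y 1) x := by
      rw [show (fun y => q y * vcurl (u t) y 1)
          = fun y => q y * (fderiv ℝ (Function.uncurry u) (t, y) (0, NSH.ee 2) 0
            - fderiv ℝ (Function.uncurry u) (t, y) (0, NSH.ee 0) 2) from
        funext fun y => by simp [vcurl, NSH.pd_u hu]]
      exact ((hqdiff x).hasFDerivAt.mul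
        ((NSH.hasF_DU hu t x (0, NSH.ee 2) 0).sub
          (NSH.hasF_DU hu t x (0, NSH.ee 0) 2))).differentiableAt
    have hc2 : DifferentiableAt ℝ (fun y => q y * vcurl (u t) y 2) x := by
      rw [show (fun y => q y * vcurl (u t) y 2)
          = fun y => q y * (fderiv ℝ (Function.uncurry u) (t, y) (0, NSH.ee 0) 1
            - fderiv ℝ (Function.uncurry u) (t, y) (0, NSH.ee 1) 0) from
        funext fun y => by simp [vcurl, NSH.pd_u hu]]
      exact ((hqdiff x).hasFDerivAt.mul
        ((NSH.hasF_DU hu t x (0, NSH.ee 0) 1).sub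
          (NSH.hasF_DU hu t x (0, NSH.ee 1) 0))).differentiableAt
    rw [differentiableAt_pi]
    intro i
    fin_cases i
    · exact hc0
    · exact hc1
    · exact hc2
  have keyB : ∫ x in cube, dot3 (vgrad q x) (vcurl (u t) x) = 0 := by
    have hz := NSH.integral_vdiv_eq_zero (g := fun y i => q y * vcurl (u t) y i) hdiffh2
      (by
        have e : (fun x => vdiv (fun y i => q y * vcurl (u t) y i) x)
            = fun x => dot3 (vgrad q x) (vcurl (u t) x) := funext hptw
        rw [e]
        exact cgw.continuousOn)
      (by
        intro x hx i hif
        have hq0 : q x = 0 := by rw [hqdef]; exact hbcp t x ⟨hx, ⟨i, hif⟩⟩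
        simp [hq0])
    simpa only [hptw] using hz
  -- momentum equation dotted with vorticity
  have hmom' : ∀ x ∈ cube, dot3 (dtv u t x) (vcurl (u t) x)
      = dot3 (f t x) (vcurl (u t) x)
        - Re⁻¹ * dot3 (vcurl (vcurl (u t)) x) (vcurl (u t) x)
        - dot3 (vgrad q x) (vcurl (u t) x) := by
    intro x hx
    have hm := hmom t x hx
    rw [← hqdef] at hm
    have h0 := congrFun hm 0
    have h1 := congrFun hm 1
    have h2 := congrFun hm 2
    simp only [Pi.add_apply, Pi.sub_apply, Pi.smul_apply, smul_eq_mul, cross3,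
      Matrix.cons_val_zero, Matrix.cons_val_one, Matrix.head_cons, Matrix.cons_val_two,
      Matrix.tail_cons] at h0 h1 h2
    simp only [dot3]
    linear_combination (vcurl (u t) x 0) * h0 + (vcurl (u t) x 1) * h1 + (vcurl (u t) x 2) * h2
  have hmomInt : ∫ x in cube, dot3 (dtv u t x) (vcurl (u t) x)
      = (∫ x in cube, dot3 (f t x) (vcurl (u t) x))
        - Re⁻¹ * ∫ x in cube, dot3 (vcurl (vcurl (u t)) x) (vcurl (u t) x) := by
    have i1 : MeasureTheory.IntegrableOn
        (fun x => Re⁻¹ * dot3 (vcurl (vcurl (u t)) x) (vcurl (u t) x)) cube :=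
      hIccw.const_mul _
    have e2 : ∫ x in cube, (dot3 (f t x) (vcurl (u t) x)
          - Re⁻¹ * dot3 (vcurl (vcurl (u t)) x) (vcurl (u t) x)
          - dot3 (vgrad q x) (vcurl (u t) x))
        = (∫ x in cube, (dot3 (f t x) (vcurl (u t) x)
            - Re⁻¹ * dot3 (vcurl (vcurl (u t)) x) (vcurl (u t) x)))
          - ∫ x in cube, dot3 (vgrad q x) (vcurl (u t) x) :=
      MeasureTheory.integral_sub (hIfw.sub i1) hIgw
    have e3 : ∫ x in cube, (dot3 (f t x) (vcurl (u t) x)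
          - Re⁻¹ * dot3 (vcurl (vcurl (u t)) x) (vcurl (u t) x))
        = (∫ x in cube, dot3 (f t x) (vcurl (u t) x))
          - ∫ x in cube, Re⁻¹ * dot3 (vcurl (vcurl (u t)) x) (vcurl (u t) x) :=
      MeasureTheory.integral_sub hIfw i1
    have e4 : ∫ x in cube, Re⁻¹ * dot3 (vcurl (vcurl (u t)) x) (vcurl (u t) x)
        = Re⁻¹ * ∫ x in cube, dot3 (vcurl (vcurl (u t)) x) (vcurl (u t) x) :=
      MeasureTheory.integral_const_mul Re⁻¹ _
    rw [MeasureTheory.setIntegral_congr_fun cubeM (fun x hx => hmom' x hx), e2, e3, e4, keyB,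
      sub_zero]
  -- differentiation under the integral sign
  have hGt_cont : Continuous fun p : ℝ × R3 => fderiv ℝ (NSH.GG u) p (1, 0) :=
    (((NSH.GG_contDiff hu).fderiv_right h01).continuous).clm_apply continuous_const
  obtain ⟨M, hM⟩ := ((isCompact_Icc (a := t - 1) (b := t + 1)).prod
    NSH.cube_compact).exists_bound_of_continuousOn hGt_cont.continuousOn
  have main := hasDerivAt_integral_of_dominated_loc_of_deriv_le
      (μ := MeasureTheory.volume.restrict cube)
      (F := fun s x => NSH.GG u (s, x))
      (F' := fun s x => fderiv ℝ (NSH.GG u) (s, x) (1, 0))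
      (x₀ := t) (bound := fun _ => M) (s := Metric.ball t 1) (Metric.ball_mem_nhds t one_pos)
      (Filter.Eventually.of_forall fun s =>
        (((NSH.GG_contDiff hu).continuous.comp
          (continuous_const.prodMk continuous_id)).aestronglyMeasurable))
      (((NSH.GG_contDiff hu).continuous.comp sliceC).continuousOn.integrableOn_compact
        NSH.cube_compact)
      ((hGt_cont.comp sliceC).aestronglyMeasurable)
      (by
        rw [MeasureTheory.ae_restrict_iff' cubeM]
        refine Filter.Eventually.of_forall fun x hx => fun s hs => ?_
        refine hM (s, x) ⟨?_, hx⟩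
        have : |s - t| < 1 := by
          simpa [Real.dist_eq] using hs
        constructor
        · cases abs_sub_lt_iff.1 this with
          | intro h h' => linarith
        · cases abs_sub_lt_iff.1 this with
          | intro h h' => linarith)
      ((MeasureTheory.integrableOn_const_iff).2 (Or.inr (NSH.cube_compact.measure_lt_top)))
      (Filter.Eventually.of_forall fun x => fun s _ => NSH.GG_hasDerivAt hu s x)
  have hder := main.2
  -- identify the function
  have hfun : (fun s => ∫ x in cube, dot3 (u s x) (vcurl (u s) x))
      = fun s => ∫ x in cube, NSH.GG u (s, x) := by
    funext s
    exact (MeasureTheory.setIntegral_congr_fun cubeM fun x _ => (NSH.GG_eq hu s x).symm)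
  -- identify the derivative value
  have hval : ∫ x in cube, fderiv ℝ (NSH.GG u) (t, x) (1, 0)
      = -2 * Re⁻¹ * (∫ x in cube, dot3 (vcurl (vcurl (u t)) x) (vcurl (u t) x))
        + 2 * ∫ x in cube, dot3 (f t x) (vcurl (u t) x) := by
    have e1 : ∫ x in cube, fderiv ℝ (NSH.GG u) (t, x) (1, 0)
        = ∫ x in cube, (dot3 (dtv u t x) (vcurl (u t) x)
            + dot3 (u t x) (vcurl (dtv u t) x)) :=
      MeasureTheory.setIntegral_congr_fun cubeM fun x _ => NSH.GG_t_eq hu t x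
    rw [e1, MeasureTheory.integral_add hIAw hIuCA, hsplitA, hmomInt]
    ring
  rw [hfun, ← hval]
  exact hder
end
end

section
/- Let u : ℝ × ℝ³ → ℝ³ be twice continuously differentiable (jointly in (t,x)) and let p̃ : ℝ × ℝ³ → ℝ be continuously differentiable. Suppose that for all t ∈ ℝ and x ∈ Ω = [0,1]³ the ideal (Euler) equations hold: ∂ₜu − u × (curl u) + ∇(½|u|² + p̃) = 0 and div u = 0, together with the boundary conditions u × n = 0 and ½|u|² + p̃ = 0 on ∂Ω for all t. Then the fluid helicity is conserved: for every t ∈ ℝ, ∫_Ω u(t,x) · (curl u(t,·))(x) dx = ∫_Ω u(0,x) · (curl u(0,·))(x) dx. -/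
open MeasureTheory

noncomputable section

/-! ### Auxiliary machinery -/

open Function

namespace EulerHelicity

noncomputable def Du (u : ℝ → R3 → R3) (t : ℝ) (x : R3) : ℝ × R3 →L[ℝ] R3 :=
  fderiv ℝ (uncurry u) (t, x)

noncomputable def D2u (u : ℝ → R3 → R3) (t : ℝ) (x : R3) :
    ℝ × R3 →L[ℝ] (ℝ × R3) →L[ℝ] R3 :=
  fderiv ℝ (fderiv ℝ (uncurry u)) (t, x)

noncomputable def Dp (pt : ℝ → R3 → ℝ) (t : ℝ) (x : R3) : ℝ × R3 →L[ℝ] ℝ :=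
  fderiv ℝ (uncurry pt) (t, x)

variable {u : ℝ → R3 → R3} {pt : ℝ → R3 → ℝ}

theorem hasFDerivAt_uncurry (hu : ContDiff ℝ 2 (uncurry u)) (t : ℝ) (x : R3) :
    HasFDerivAt (uncurry u) (Du u t x) (t, x) :=
  ((hu.differentiable (by norm_num)) (t, x)).hasFDerivAt

theorem hasFDerivAt_emb (t : ℝ) (x : R3) :
    HasFDerivAt (fun y : R3 => ((t : ℝ), y))
      ((0 : R3 →L[ℝ] ℝ).prod (ContinuousLinearMap.id ℝ R3)) x :=
  HasFDerivAt.prodMk (hasFDerivAt_const t x) (hasFDerivAt_id x)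

theorem hasFDerivAt_embt (t : ℝ) (x : R3) :
    HasFDerivAt (fun s : ℝ => (s, x))
      ((ContinuousLinearMap.id ℝ ℝ).prod (0 : ℝ →L[ℝ] R3)) t :=
  HasFDerivAt.prodMk (hasFDerivAt_id t) (hasFDerivAt_const x t)

theorem hasFDerivAt_slice (hu : ContDiff ℝ 2 (uncurry u)) (t : ℝ) (x : R3) (j : Fin 3) :
    HasFDerivAt (fun y => u t y j)
      ((ContinuousLinearMap.proj j (R := ℝ) (φ := fun _ : Fin 3 => ℝ)).comp
        ((Du u t x).comp ((0 : R3 →L[ℝ] ℝ).prod (ContinuousLinearMap.id ℝ R3)))) x := by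
  have h2 : HasFDerivAt (fun y : R3 => u t y)
      ((Du u t x).comp ((0 : R3 →L[ℝ] ℝ).prod (ContinuousLinearMap.id ℝ R3))) x :=
    (hasFDerivAt_uncurry hu t x).comp x (hasFDerivAt_emb t x)
  exact ((ContinuousLinearMap.proj j).hasFDerivAt).comp x h2

theorem pd_slice (hu : ContDiff ℝ 2 (uncurry u)) (t : ℝ) (x : R3) (i j : Fin 3) :
    pd i (fun y => u t y j) x = Du u t x (0, Pi.single i 1) j := by
  rw [pd, (hasFDerivAt_slice hu t x j).fderiv]
  simp

theorem hasDerivAt_time (hu : ContDiff ℝ 2 (uncurry u)) (t : ℝ) (x : R3) (j : Fin 3) :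
    HasDerivAt (fun s => u s x j) (Du u t x (1, 0) j) t := by
  have h2 : HasFDerivAt (fun s : ℝ => u s x)
      ((Du u t x).comp ((ContinuousLinearMap.id ℝ ℝ).prod (0 : ℝ →L[ℝ] R3))) t := by
    have := (hasFDerivAt_uncurry hu t x).comp t (hasFDerivAt_embt t x); exact this
  have h3 := ((ContinuousLinearMap.proj j (R := ℝ)
      (φ := fun _ : Fin 3 => ℝ)).hasFDerivAt).comp t h2
  have h4 := h3.hasDerivAt
  exact h4

theorem contDiff_G (hu : ContDiff ℝ 2 (uncurry u)) :
    ContDiff ℝ 1 (fderiv ℝ (uncurry u)) :=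
  hu.fderiv_right (by norm_num)

theorem hasFDerivAt_G (hu : ContDiff ℝ 2 (uncurry u)) (t : ℝ) (x : R3) :
    HasFDerivAt (fderiv ℝ (uncurry u)) (D2u u t x) (t, x) :=
  (((contDiff_G hu).differentiable (by norm_num)) (t, x)).hasFDerivAt

theorem hasFDerivAt_Gwj (hu : ContDiff ℝ 2 (uncurry u)) (t : ℝ) (x : R3)
    (w : ℝ × R3) (j : Fin 3) :
    HasFDerivAt (fun p : ℝ × R3 => fderiv ℝ (uncurry u) p w j)
      ((ContinuousLinearMap.proj j (R := ℝ) (φ := fun _ : Fin 3 => ℝ)).comp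
        ((ContinuousLinearMap.apply ℝ R3 w).comp (D2u u t x))) (t, x) := by
  exact ((ContinuousLinearMap.proj j).hasFDerivAt).comp _
    (((ContinuousLinearMap.apply ℝ R3 w).hasFDerivAt).comp _ (hasFDerivAt_G hu t x))

theorem hasDerivAt_Du_time (hu : ContDiff ℝ 2 (uncurry u)) (t : ℝ) (x : R3)
    (w : ℝ × R3) (j : Fin 3) :
    HasDerivAt (fun s => Du u s x w j) (D2u u t x (1, 0) w j) t := by
  have h2 := (hasFDerivAt_Gwj hu t x w j).comp t (f := fun s : ℝ => (s, x))
    (HasFDerivAt.prodMk (hasFDerivAt_id t) (hasFDerivAt_const x t))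
  have := h2.hasDerivAt
  exact this

theorem hasFDerivAt_Du_space (hu : ContDiff ℝ 2 (uncurry u)) (t : ℝ) (x : R3)
    (w : ℝ × R3) (j : Fin 3) :
    HasFDerivAt (fun y => Du u t y w j)
      (((ContinuousLinearMap.proj j (R := ℝ) (φ := fun _ : Fin 3 => ℝ)).comp
        ((ContinuousLinearMap.apply ℝ R3 w).comp (D2u u t x))).comp
        ((0 : R3 →L[ℝ] ℝ).prod (ContinuousLinearMap.id ℝ R3))) x :=
  (hasFDerivAt_Gwj hu t x w j).comp x
    (HasFDerivAt.prodMk (hasFDerivAt_const t x) (hasFDerivAt_id x))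

theorem pd_Du (hu : ContDiff ℝ 2 (uncurry u)) (t : ℝ) (x : R3)
    (w : ℝ × R3) (i j : Fin 3) :
    pd i (fun y => Du u t y w j) x = D2u u t x (0, Pi.single i 1) w j := by
  rw [pd, (hasFDerivAt_Du_space hu t x w j).fderiv]
  simp

theorem D2u_symm (hu : ContDiff ℝ 2 (uncurry u)) (t : ℝ) (x : R3) (v w : ℝ × R3) :
    D2u u t x v w = D2u u t x w v :=
  (hu.contDiffAt.isSymmSndFDerivAt (by norm_num)) v w

theorem dtv_eq (hu : ContDiff ℝ 2 (uncurry u)) (t : ℝ) (x : R3) (j : Fin 3) :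
    dtv u t x j = Du u t x (1, 0) j := (hasDerivAt_time hu t x j).deriv

/-- Scalar slice for `pt`. -/
theorem hasFDerivAt_slice_p (hp : ContDiff ℝ 1 (uncurry pt)) (t : ℝ) (x : R3) :
    HasFDerivAt (fun y => pt t y)
      ((Dp pt t x).comp ((0 : R3 →L[ℝ] ℝ).prod (ContinuousLinearMap.id ℝ R3))) x :=
  (((hp.differentiable (by norm_num)) (t, x)).hasFDerivAt).comp x (hasFDerivAt_emb t x)

theorem pd_slice_p (hp : ContDiff ℝ 1 (uncurry pt)) (t : ℝ) (x : R3) (i : Fin 3) :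
    pd i (fun y => pt t y) x = Dp pt t x (0, Pi.single i 1) := by
  rw [pd, (hasFDerivAt_slice_p hp t x).fderiv]
  simp

theorem pd_add {f g : R3 → ℝ} {x : R3} (hf : DifferentiableAt ℝ f x)
    (hg : DifferentiableAt ℝ g x) (i : Fin 3) :
    pd i (fun y => f y + g y) x = pd i f x + pd i g x := by
  simp [pd, fderiv_fun_add hf hg]

theorem pd_sub {f g : R3 → ℝ} {x : R3} (hf : DifferentiableAt ℝ f x)
    (hg : DifferentiableAt ℝ g x) (i : Fin 3) :
    pd i (fun y => f y - g y) x = pd i f x - pd i g x := by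
  simp [pd, fderiv_fun_sub hf hg]

theorem pd_mul {f g : R3 → ℝ} {x : R3} (hf : DifferentiableAt ℝ f x)
    (hg : DifferentiableAt ℝ g x) (i : Fin 3) :
    pd i (fun y => f y * g y) x = pd i f x * g x + f x * pd i g x := by
  simp [pd, fderiv_fun_mul hf hg]; ring

theorem pd_const_mul {f : R3 → ℝ} {x : R3} (hf : DifferentiableAt ℝ f x)
    (c : ℝ) (i : Fin 3) :
    pd i (fun y => c * f y) x = c * pd i f x := by
  simp [pd, fderiv_const_mul hf c]

theorem pd_congr {f g : R3 → ℝ} (h : ∀ y, f y = g y) (i : Fin 3) (x : R3) :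
    pd i f x = pd i g x := by
  have : f = g := funext h
  rw [this]


/-- The flux vector field whose divergence equals the time derivative of the
helicity density. -/
noncomputable def Wf (u : ℝ → R3 → R3) (pt : ℝ → R3 → ℝ) (t : ℝ) (y : R3) : R3 := fun i =>
  (-2) * (((1 / 2) * dot3 (u t y) (u t y) + pt t y) * vcurl (u t) y i)
    + cross3 (dtv u t y) (u t y) i

theorem curl0 (hu : ContDiff ℝ 2 (uncurry u)) (t : ℝ) (y : R3) :
    vcurl (u t) y 0 = Du u t y (0, Pi.single 1 1) 2 - Du u t y (0, Pi.single 2 1) 1 := by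
  simp [vcurl, pd_slice hu]

theorem curl1 (hu : ContDiff ℝ 2 (uncurry u)) (t : ℝ) (y : R3) :
    vcurl (u t) y 1 = Du u t y (0, Pi.single 2 1) 0 - Du u t y (0, Pi.single 0 1) 2 := by
  simp [vcurl, pd_slice hu]

theorem curl2 (hu : ContDiff ℝ 2 (uncurry u)) (t : ℝ) (y : R3) :
    vcurl (u t) y 2 = Du u t y (0, Pi.single 0 1) 1 - Du u t y (0, Pi.single 1 1) 0 := by
  simp [vcurl, pd_slice hu]

theorem pd_dtv (hu : ContDiff ℝ 2 (uncurry u)) (t : ℝ) (x : R3) (i j : Fin 3) :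
    pd i (fun y => dtv u t y j) x = D2u u t x (0, Pi.single i 1) (1, 0) j := by
  rw [pd_congr (fun y => dtv_eq hu t y j) i x, pd_Du hu]

theorem curlDtv0 (hu : ContDiff ℝ 2 (uncurry u)) (t : ℝ) (x : R3) :
    vcurl (dtv u t) x 0 = D2u u t x (0, Pi.single 1 1) (1, 0) 2
      - D2u u t x (0, Pi.single 2 1) (1, 0) 1 := by
  simp [vcurl, pd_dtv hu]

theorem curlDtv1 (hu : ContDiff ℝ 2 (uncurry u)) (t : ℝ) (x : R3) :
    vcurl (dtv u t) x 1 = D2u u t x (0, Pi.single 2 1) (1, 0) 0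
      - D2u u t x (0, Pi.single 0 1) (1, 0) 2 := by
  simp [vcurl, pd_dtv hu]

theorem curlDtv2 (hu : ContDiff ℝ 2 (uncurry u)) (t : ℝ) (x : R3) :
    vcurl (dtv u t) x 2 = D2u u t x (0, Pi.single 0 1) (1, 0) 1
      - D2u u t x (0, Pi.single 1 1) (1, 0) 0 := by
  simp [vcurl, pd_dtv hu]

theorem pd_Q (hu : ContDiff ℝ 2 (uncurry u)) (hp : ContDiff ℝ 1 (uncurry pt))
    (t : ℝ) (x : R3) (k : Fin 3) :
    pd k (fun y => (1 / 2) * dot3 (u t y) (u t y) + pt t y) x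
      = u t x 0 * Du u t x (0, Pi.single k 1) 0
        + u t x 1 * Du u t x (0, Pi.single k 1) 1
        + u t x 2 * Du u t x (0, Pi.single k 1) 2
        + Dp pt t x (0, Pi.single k 1) := by
  have hUd : ∀ (y : R3) (j : Fin 3), DifferentiableAt ℝ (fun z => u t z j) y :=
    fun y j => (hasFDerivAt_slice hu t y j).differentiableAt
  have hptd : ∀ y : R3, DifferentiableAt ℝ (fun z => pt t z) y :=
    fun y => (hasFDerivAt_slice_p hp t y).differentiableAt
  have hdot : DifferentiableAt ℝ
      (fun z => u t z 0 * u t z 0 + u t z 1 * u t z 1 + u t z 2 * u t z 2) x :=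
    (((hUd x 0).mul (hUd x 0)).add ((hUd x 1).mul (hUd x 1))).add ((hUd x 2).mul (hUd x 2))
  have e1 : (fun y => (1 / 2 : ℝ) * dot3 (u t y) (u t y) + pt t y)
      = fun y => (1 / 2 : ℝ) * (u t y 0 * u t y 0 + u t y 1 * u t y 1 + u t y 2 * u t y 2)
        + pt t y := by
    funext y; simp [dot3]
  rw [pd_congr (fun y => congrFun e1 y) k x,
    pd_add (hdot.const_mul _) (hptd x),
    pd_const_mul hdot,
    pd_add (((hUd x 0).fun_mul (hUd x 0)).fun_add ((hUd x 1).fun_mul (hUd x 1))) ((hUd x 2).fun_mul (hUd x 2)),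
    pd_add ((hUd x 0).fun_mul (hUd x 0)) ((hUd x 1).fun_mul (hUd x 1)),
    pd_mul (hUd x 0) (hUd x 0), pd_mul (hUd x 1) (hUd x 1), pd_mul (hUd x 2) (hUd x 2)]
  simp only [pd_slice hu, pd_slice_p hp]
  ring

/-- pd of a `Wf`-shaped function. -/
theorem pd_Wshape {Q Om C1 C2 b1 b2 : R3 → ℝ} {x : R3}
    (hQ : ∀ y, DifferentiableAt ℝ Q y) (hOm : ∀ y, DifferentiableAt ℝ Om y)
    (hC1 : ∀ y, DifferentiableAt ℝ C1 y) (hC2 : ∀ y, DifferentiableAt ℝ C2 y)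
    (hb1 : ∀ y, DifferentiableAt ℝ b1 y) (hb2 : ∀ y, DifferentiableAt ℝ b2 y) (i : Fin 3) :
    pd i (fun y => (-2) * (Q y * Om y) + (C1 y * b2 y - C2 y * b1 y)) x
      = (-2) * ((pd i Q x * Om x + Q x * pd i Om x))
        + (pd i C1 x * b2 x + C1 x * pd i b2 x - (pd i C2 x * b1 x + C2 x * pd i b1 x)) := by
  rw [pd_add (((hQ x).fun_mul (hOm x)).const_mul _) (((hC1 x).fun_mul (hb2 x)).fun_sub ((hC2 x).fun_mul (hb1 x))),
    pd_const_mul ((hQ x).fun_mul (hOm x)),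
    pd_mul (hQ x) (hOm x),
    pd_sub ((hC1 x).fun_mul (hb2 x)) ((hC2 x).fun_mul (hb1 x)),
    pd_mul (hC1 x) (hb2 x), pd_mul (hC2 x) (hb1 x)]


theorem pd_DuSub (hu : ContDiff ℝ 2 (uncurry u)) (t : ℝ) (x : R3)
    (w1 w2 : ℝ × R3) (j1 j2 i : Fin 3) :
    pd i (fun y => Du u t y w1 j1 - Du u t y w2 j2) x
      = D2u u t x (0, Pi.single i 1) w1 j1 - D2u u t x (0, Pi.single i 1) w2 j2 := by
  rw [pd_sub (hasFDerivAt_Du_space hu t x w1 j1).differentiableAt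
    (hasFDerivAt_Du_space hu t x w2 j2).differentiableAt, pd_Du hu, pd_Du hu]

theorem phi'_eq_divW (hu : ContDiff ℝ 2 (uncurry u)) (hp : ContDiff ℝ 1 (uncurry pt))
    (t : ℝ) (x : R3)
    (hm : dtv u t x - cross3 (u t x) (vcurl (u t) x)
      + vgrad (fun y => (1 / 2) * dot3 (u t y) (u t y) + pt t y) x = 0) :
    dot3 (dtv u t x) (vcurl (u t) x) + dot3 (u t x) (vcurl (dtv u t) x)
      = vdiv (Wf u pt t) x := by
  have hUd : ∀ (y : R3) (j : Fin 3), DifferentiableAt ℝ (fun z => u t z j) y :=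
    fun y j => (hasFDerivAt_slice hu t y j).differentiableAt
  have hDud : ∀ (y : R3) (w : ℝ × R3) (j : Fin 3),
      DifferentiableAt ℝ (fun z => Du u t z w j) y :=
    fun y w j => (hasFDerivAt_Du_space hu t y w j).differentiableAt
  have hptd : ∀ y : R3, DifferentiableAt ℝ (fun z => pt t z) y :=
    fun y => (hasFDerivAt_slice_p hp t y).differentiableAt
  have hQd : ∀ y : R3, DifferentiableAt ℝ
      (fun z => (1 / 2) * dot3 (u t z) (u t z) + pt t z) y := by
    intro y
    have e1 : (fun z => (1 / 2 : ℝ) * dot3 (u t z) (u t z) + pt t z)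
        = fun z => (1 / 2 : ℝ) * (u t z 0 * u t z 0 + u t z 1 * u t z 1 + u t z 2 * u t z 2)
          + pt t z := by
      funext z; simp [dot3]
    rw [e1]
    exact (((((hUd y 0).mul (hUd y 0)).add ((hUd y 1).mul (hUd y 1))).add
      ((hUd y 2).mul (hUd y 2))).const_mul _).add (hptd y)
  have hOm0d : ∀ y : R3, DifferentiableAt ℝ
      (fun z => Du u t z (0, Pi.single 1 1) 2 - Du u t z (0, Pi.single 2 1) 1) y :=
    fun y => (hDud y _ _).sub (hDud y _ _)
  have hOm1d : ∀ y : R3, DifferentiableAt ℝ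
      (fun z => Du u t z (0, Pi.single 2 1) 0 - Du u t z (0, Pi.single 0 1) 2) y :=
    fun y => (hDud y _ _).sub (hDud y _ _)
  have hOm2d : ∀ y : R3, DifferentiableAt ℝ
      (fun z => Du u t z (0, Pi.single 0 1) 1 - Du u t z (0, Pi.single 1 1) 0) y :=
    fun y => (hDud y _ _).sub (hDud y _ _)
  -- component function equalities for Wf
  have hW0 : (fun y => Wf u pt t y 0) = fun y =>
      (-2) * (((1 / 2) * dot3 (u t y) (u t y) + pt t y)
        * (Du u t y (0, Pi.single 1 1) 2 - Du u t y (0, Pi.single 2 1) 1))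
      + (Du u t y (1, 0) 1 * u t y 2 - Du u t y (1, 0) 2 * u t y 1) := by
    funext y
    simp only [Wf, curl0 hu]
    simp only [cross3, Matrix.cons_val_zero, dtv_eq hu]
  have hW1 : (fun y => Wf u pt t y 1) = fun y =>
      (-2) * (((1 / 2) * dot3 (u t y) (u t y) + pt t y)
        * (Du u t y (0, Pi.single 2 1) 0 - Du u t y (0, Pi.single 0 1) 2))
      + (Du u t y (1, 0) 2 * u t y 0 - Du u t y (1, 0) 0 * u t y 2) := by
    funext y
    simp only [Wf, curl1 hu]
    simp only [cross3, Matrix.cons_val_one, Matrix.cons_val_zero, Matrix.head_cons, dtv_eq hu]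
  have hW2 : (fun y => Wf u pt t y 2) = fun y =>
      (-2) * (((1 / 2) * dot3 (u t y) (u t y) + pt t y)
        * (Du u t y (0, Pi.single 0 1) 1 - Du u t y (0, Pi.single 1 1) 0))
      + (Du u t y (1, 0) 0 * u t y 1 - Du u t y (1, 0) 1 * u t y 0) := by
    funext y
    simp only [Wf, curl2 hu]
    simp only [cross3, Matrix.cons_val_two, Matrix.tail_cons, Matrix.head_cons, dtv_eq hu]
  -- expand the divergence
  simp only [vdiv]
  rw [pd_congr (fun y => congrFun hW0 y) 0 x, pd_congr (fun y => congrFun hW1 y) 1 x,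
    pd_congr (fun y => congrFun hW2 y) 2 x]
  rw [pd_Wshape hQd hOm0d (fun y => hDud y (1, 0) 1) (fun y => hDud y (1, 0) 2)
      (fun y => hUd y 1) (fun y => hUd y 2) 0,
    pd_Wshape hQd hOm1d (fun y => hDud y (1, 0) 2) (fun y => hDud y (1, 0) 0)
      (fun y => hUd y 2) (fun y => hUd y 0) 1,
    pd_Wshape hQd hOm2d (fun y => hDud y (1, 0) 0) (fun y => hDud y (1, 0) 1)
      (fun y => hUd y 0) (fun y => hUd y 1) 2]
  simp only [pd_Q hu hp, pd_DuSub hu, pd_Du hu, pd_slice hu]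
  -- expand the left-hand side
  simp only [dot3, dtv_eq hu, curl0 hu, curl1 hu, curl2 hu, curlDtv0 hu, curlDtv1 hu,
    curlDtv2 hu]
  -- extract the momentum equation components
  have hm0 := congrFun hm 0
  have hm1 := congrFun hm 1
  have hm2 := congrFun hm 2
  simp only [Pi.add_apply, Pi.sub_apply, Pi.zero_apply, vgrad, cross3,
    Matrix.cons_val_zero, Matrix.cons_val_one, Matrix.head_cons, Matrix.cons_val_two,
    Matrix.tail_cons, dtv_eq hu, curl0 hu, curl1 hu, curl2 hu, pd_Q hu hp] at hm0 hm1 hm2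
  -- normalize second spatial derivatives using symmetry
  rw [D2u_symm hu t x ((0 : ℝ), Pi.single (1 : Fin 3) (1 : ℝ)) (0, Pi.single 0 1),
    D2u_symm hu t x ((0 : ℝ), Pi.single (2 : Fin 3) (1 : ℝ)) (0, Pi.single 0 1),
    D2u_symm hu t x ((0 : ℝ), Pi.single (2 : Fin 3) (1 : ℝ)) (0, Pi.single 1 1)]
  linear_combination
    (2 * (Du u t x (0, Pi.single 1 1) 2 - Du u t x (0, Pi.single 2 1) 1)) * hm0
    + (2 * (Du u t x (0, Pi.single 2 1) 0 - Du u t x (0, Pi.single 0 1) 2)) * hm1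
    + (2 * (Du u t x (0, Pi.single 0 1) 1 - Du u t x (0, Pi.single 1 1) 0)) * hm2


/-- Time derivative of the helicity density. -/
theorem hasDerivAt_phi (hu : ContDiff ℝ 2 (uncurry u)) (t : ℝ) (x : R3) :
    HasDerivAt (fun s => dot3 (u s x) (vcurl (u s) x))
      (dot3 (dtv u t x) (vcurl (u t) x) + dot3 (u t x) (vcurl (dtv u t) x)) t := by
  have hfun : (fun s => dot3 (u s x) (vcurl (u s) x)) = fun s =>
      u s x 0 * (Du u s x (0, Pi.single 1 1) 2 - Du u s x (0, Pi.single 2 1) 1)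
      + u s x 1 * (Du u s x (0, Pi.single 2 1) 0 - Du u s x (0, Pi.single 0 1) 2)
      + u s x 2 * (Du u s x (0, Pi.single 0 1) 1 - Du u s x (0, Pi.single 1 1) 0) := by
    funext s
    simp only [dot3, curl0 hu, curl1 hu, curl2 hu]
  rw [hfun]
  have h := (((hasDerivAt_time hu t x 0).fun_mul
      ((hasDerivAt_Du_time hu t x (0, Pi.single 1 1) 2).fun_sub
        (hasDerivAt_Du_time hu t x (0, Pi.single 2 1) 1))).fun_add
    ((hasDerivAt_time hu t x 1).fun_mul
      ((hasDerivAt_Du_time hu t x (0, Pi.single 2 1) 0).fun_sub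
        (hasDerivAt_Du_time hu t x (0, Pi.single 0 1) 2)))).fun_add
    ((hasDerivAt_time hu t x 2).fun_mul
      ((hasDerivAt_Du_time hu t x (0, Pi.single 0 1) 1).fun_sub
        (hasDerivAt_Du_time hu t x (0, Pi.single 1 1) 0)))
  refine h.congr_deriv ?_
  simp only [dot3, dtv_eq hu, curl0 hu, curl1 hu, curl2 hu, curlDtv0 hu, curlDtv1 hu,
    curlDtv2 hu]
  rw [D2u_symm hu t x ((0 : ℝ), Pi.single (0 : Fin 3) (1 : ℝ)) (1, 0),
    D2u_symm hu t x ((0 : ℝ), Pi.single (1 : Fin 3) (1 : ℝ)) (1, 0),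
    D2u_symm hu t x ((0 : ℝ), Pi.single (2 : Fin 3) (1 : ℝ)) (1, 0)]
  ring

theorem continuous_u_comp (hu : ContDiff ℝ 2 (uncurry u)) (j : Fin 3) :
    Continuous fun p : ℝ × R3 => u p.1 p.2 j :=
  (continuous_apply j).comp hu.continuous

theorem continuous_Du_comp (hu : ContDiff ℝ 2 (uncurry u)) (w : ℝ × R3) (j : Fin 3) :
    Continuous fun p : ℝ × R3 => Du u p.1 p.2 w j := by
  have hGc : Continuous (fderiv ℝ (uncurry u)) := (contDiff_G hu).continuous
  have : Continuous fun p : ℝ × R3 => fderiv ℝ (uncurry u) p w j :=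
    (continuous_apply j).comp ((ContinuousLinearMap.apply ℝ R3 w).continuous.comp hGc)
  simpa [Du] using this

theorem continuous_D2u_comp (hu : ContDiff ℝ 2 (uncurry u)) (v w : ℝ × R3) (j : Fin 3) :
    Continuous fun p : ℝ × R3 => D2u u p.1 p.2 v w j := by
  have hGc : Continuous (fderiv ℝ (fderiv ℝ (uncurry u))) :=
    ((contDiff_G hu).fderiv_right (m := 0) (by norm_num)).continuous
  have : Continuous fun p : ℝ × R3 => fderiv ℝ (fderiv ℝ (uncurry u)) p v w j :=
    (continuous_apply j).comp ((ContinuousLinearMap.apply ℝ R3 w).continuous.comp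
      ((ContinuousLinearMap.apply ℝ _ v).continuous.comp hGc))
  simpa [D2u] using this

theorem continuous_phi (hu : ContDiff ℝ 2 (uncurry u)) :
    Continuous fun p : ℝ × R3 => dot3 (u p.1 p.2) (vcurl (u p.1) p.2) := by
  have hfun : (fun p : ℝ × R3 => dot3 (u p.1 p.2) (vcurl (u p.1) p.2)) = fun p =>
      u p.1 p.2 0 * (Du u p.1 p.2 (0, Pi.single 1 1) 2 - Du u p.1 p.2 (0, Pi.single 2 1) 1)
      + u p.1 p.2 1 * (Du u p.1 p.2 (0, Pi.single 2 1) 0 - Du u p.1 p.2 (0, Pi.single 0 1) 2)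
      + u p.1 p.2 2 * (Du u p.1 p.2 (0, Pi.single 0 1) 1 - Du u p.1 p.2 (0, Pi.single 1 1) 0) := by
    funext p
    simp only [dot3, curl0 hu, curl1 hu, curl2 hu]
  rw [hfun]
  exact (((continuous_u_comp hu 0).mul
      ((continuous_Du_comp hu _ _).sub (continuous_Du_comp hu _ _))).add
    ((continuous_u_comp hu 1).mul
      ((continuous_Du_comp hu _ _).sub (continuous_Du_comp hu _ _)))).add
    ((continuous_u_comp hu 2).mul
      ((continuous_Du_comp hu _ _).sub (continuous_Du_comp hu _ _)))

theorem continuous_phi' (hu : ContDiff ℝ 2 (uncurry u)) :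
    Continuous fun p : ℝ × R3 =>
      dot3 (dtv u p.1 p.2) (vcurl (u p.1) p.2) + dot3 (u p.1 p.2) (vcurl (dtv u p.1) p.2) := by
  have hfun : (fun p : ℝ × R3 =>
      dot3 (dtv u p.1 p.2) (vcurl (u p.1) p.2) + dot3 (u p.1 p.2) (vcurl (dtv u p.1) p.2))
      = fun p =>
      (Du u p.1 p.2 (1, 0) 0
          * (Du u p.1 p.2 (0, Pi.single 1 1) 2 - Du u p.1 p.2 (0, Pi.single 2 1) 1)
        + Du u p.1 p.2 (1, 0) 1
          * (Du u p.1 p.2 (0, Pi.single 2 1) 0 - Du u p.1 p.2 (0, Pi.single 0 1) 2)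
        + Du u p.1 p.2 (1, 0) 2
          * (Du u p.1 p.2 (0, Pi.single 0 1) 1 - Du u p.1 p.2 (0, Pi.single 1 1) 0))
      + (u p.1 p.2 0 * (D2u u p.1 p.2 (0, Pi.single 1 1) (1, 0) 2
            - D2u u p.1 p.2 (0, Pi.single 2 1) (1, 0) 1)
        + u p.1 p.2 1 * (D2u u p.1 p.2 (0, Pi.single 2 1) (1, 0) 0
            - D2u u p.1 p.2 (0, Pi.single 0 1) (1, 0) 2)
        + u p.1 p.2 2 * (D2u u p.1 p.2 (0, Pi.single 0 1) (1, 0) 1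
            - D2u u p.1 p.2 (0, Pi.single 1 1) (1, 0) 0)) := by
    funext p
    simp only [dot3, dtv_eq hu, curl0 hu, curl1 hu, curl2 hu, curlDtv0 hu, curlDtv1 hu,
      curlDtv2 hu]
  rw [hfun]
  refine Continuous.add ?_ ?_
  · exact (((continuous_Du_comp hu _ _).mul
        ((continuous_Du_comp hu _ _).sub (continuous_Du_comp hu _ _))).add
      ((continuous_Du_comp hu _ _).mul
        ((continuous_Du_comp hu _ _).sub (continuous_Du_comp hu _ _)))).add
      ((continuous_Du_comp hu _ _).mul
        ((continuous_Du_comp hu _ _).sub (continuous_Du_comp hu _ _)))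
  · exact (((continuous_u_comp hu 0).mul
        ((continuous_D2u_comp hu _ _ _).sub (continuous_D2u_comp hu _ _ _))).add
      ((continuous_u_comp hu 1).mul
        ((continuous_D2u_comp hu _ _ _).sub (continuous_D2u_comp hu _ _ _)))).add
      ((continuous_u_comp hu 2).mul
        ((continuous_D2u_comp hu _ _ _).sub (continuous_D2u_comp hu _ _ _)))


theorem Wf_eq0 (hu : ContDiff ℝ 2 (uncurry u)) (t : ℝ) :
    (fun y => Wf u pt t y 0) = fun y =>
      (-2) * (((1 / 2) * dot3 (u t y) (u t y) + pt t y)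
        * (Du u t y (0, Pi.single 1 1) 2 - Du u t y (0, Pi.single 2 1) 1))
      + (Du u t y (1, 0) 1 * u t y 2 - Du u t y (1, 0) 2 * u t y 1) := by
  funext y
  simp only [Wf, curl0 hu]
  simp only [cross3, Matrix.cons_val_zero, dtv_eq hu]

theorem Wf_eq1 (hu : ContDiff ℝ 2 (uncurry u)) (t : ℝ) :
    (fun y => Wf u pt t y 1) = fun y =>
      (-2) * (((1 / 2) * dot3 (u t y) (u t y) + pt t y)
        * (Du u t y (0, Pi.single 2 1) 0 - Du u t y (0, Pi.single 0 1) 2))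
      + (Du u t y (1, 0) 2 * u t y 0 - Du u t y (1, 0) 0 * u t y 2) := by
  funext y
  simp only [Wf, curl1 hu]
  simp only [cross3, Matrix.cons_val_one, Matrix.cons_val_zero, Matrix.head_cons, dtv_eq hu]

theorem Wf_eq2 (hu : ContDiff ℝ 2 (uncurry u)) (t : ℝ) :
    (fun y => Wf u pt t y 2) = fun y =>
      (-2) * (((1 / 2) * dot3 (u t y) (u t y) + pt t y)
        * (Du u t y (0, Pi.single 0 1) 1 - Du u t y (0, Pi.single 1 1) 0))
      + (Du u t y (1, 0) 0 * u t y 1 - Du u t y (1, 0) 1 * u t y 0) := by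
  funext y
  simp only [Wf, curl2 hu]
  simp only [cross3, Matrix.cons_val_two, Matrix.tail_cons, Matrix.head_cons, dtv_eq hu]

theorem diffAt_Q (hu : ContDiff ℝ 2 (uncurry u)) (hp : ContDiff ℝ 1 (uncurry pt))
    (t : ℝ) (y : R3) :
    DifferentiableAt ℝ (fun z => (1 / 2) * dot3 (u t z) (u t z) + pt t z) y := by
  have hUd : ∀ (y : R3) (j : Fin 3), DifferentiableAt ℝ (fun z => u t z j) y :=
    fun y j => (hasFDerivAt_slice hu t y j).differentiableAt
  have e1 : (fun z => (1 / 2 : ℝ) * dot3 (u t z) (u t z) + pt t z)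
      = fun z => (1 / 2 : ℝ) * (u t z 0 * u t z 0 + u t z 1 * u t z 1 + u t z 2 * u t z 2)
        + pt t z := by
    funext z; simp [dot3]
  rw [e1]
  exact (((((hUd y 0).mul (hUd y 0)).add ((hUd y 1).mul (hUd y 1))).add
    ((hUd y 2).mul (hUd y 2))).const_mul _).add (hasFDerivAt_slice_p hp t y).differentiableAt

theorem diff_Wf (hu : ContDiff ℝ 2 (uncurry u)) (hp : ContDiff ℝ 1 (uncurry pt))
    (t : ℝ) (i : Fin 3) :
    Differentiable ℝ (fun z => Wf u pt t z i) := by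
  have hUd : ∀ (y : R3) (j : Fin 3), DifferentiableAt ℝ (fun z => u t z j) y :=
    fun y j => (hasFDerivAt_slice hu t y j).differentiableAt
  have hDud : ∀ (y : R3) (w : ℝ × R3) (j : Fin 3),
      DifferentiableAt ℝ (fun z => Du u t z w j) y :=
    fun y w j => (hasFDerivAt_Du_space hu t y w j).differentiableAt
  fin_cases i
  · show Differentiable ℝ fun z => Wf u pt t z 0
    rw [Wf_eq0 hu t]
    exact fun y => ((((diffAt_Q hu hp t y).mul ((hDud y _ _).sub (hDud y _ _))).const_mul _).add
      (((hDud y _ _).mul (hUd y 2)).sub ((hDud y _ _).mul (hUd y 1))))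
  · show Differentiable ℝ fun z => Wf u pt t z 1
    rw [Wf_eq1 hu t]
    exact fun y => ((((diffAt_Q hu hp t y).mul ((hDud y _ _).sub (hDud y _ _))).const_mul _).add
      (((hDud y _ _).mul (hUd y 0)).sub ((hDud y _ _).mul (hUd y 2))))
  · show Differentiable ℝ fun z => Wf u pt t z 2
    rw [Wf_eq2 hu t]
    exact fun y => ((((diffAt_Q hu hp t y).mul ((hDud y _ _).sub (hDud y _ _))).const_mul _).add
      (((hDud y _ _).mul (hUd y 1)).sub ((hDud y _ _).mul (hUd y 0))))

theorem Wf_bdry_zero (t : ℝ)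
    (hq0 : ∀ x : R3, onBdry x → (1 / 2) * dot3 (u t x) (u t x) + pt t x = 0)
    (htan : TangentialBC (u t)) :
    ∀ x ∈ cube, ∀ i : Fin 3, onFace x i → Wf u pt t x i = 0 := by
  intro x hx i hf
  have hq := hq0 x ⟨hx, i, hf⟩
  fin_cases i
  · have h1 : u t x 1 = 0 := htan x hx 0 hf 1 (by decide)
    have h2 : u t x 2 = 0 := htan x hx 0 hf 2 (by decide)
    show Wf u pt t x 0 = 0
    simp only [Wf, cross3, Matrix.cons_val_zero]
    rw [hq, h1, h2]; ring
  · have h1 : u t x 0 = 0 := htan x hx 1 hf 0 (by decide)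
    have h2 : u t x 2 = 0 := htan x hx 1 hf 2 (by decide)
    show Wf u pt t x 1 = 0
    simp only [Wf, cross3, Matrix.cons_val_one, Matrix.cons_val_zero, Matrix.head_cons]
    rw [hq, h1, h2]; ring
  · have h1 : u t x 0 = 0 := htan x hx 2 hf 0 (by decide)
    have h2 : u t x 1 = 0 := htan x hx 2 hf 1 (by decide)
    show Wf u pt t x 2 = 0
    simp only [Wf, cross3, Matrix.cons_val_two, Matrix.tail_cons, Matrix.head_cons]
    rw [hq, h1, h2]; ring


theorem integral_divW (hu : ContDiff ℝ 2 (uncurry u)) (hp : ContDiff ℝ 1 (uncurry pt)) (t : ℝ)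
    (hq0 : ∀ x : R3, onBdry x → (1 / 2) * dot3 (u t x) (u t x) + pt t x = 0)
    (htan : TangentialBC (u t))
    (hIi : IntegrableOn (fun x => vdiv (Wf u pt t) x) cube) :
    ∫ x in cube, vdiv (Wf u pt t) x = 0 := by
  have hle : (0 : Fin 3 → ℝ) ≤ 1 := fun i => by norm_num
  have hsum : ∀ x : R3,
      (∑ i : Fin 3, fderiv ℝ (fun z => Wf u pt t z i) x (Pi.single i 1))
        = vdiv (Wf u pt t) x := fun x => by
    rw [Fin.sum_univ_three]; rfl
  have hdt := MeasureTheory.integral_divergence_of_hasFDerivAt_off_countable'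
    (a := (0 : Fin 3 → ℝ)) (b := (1 : Fin 3 → ℝ)) hle
    (fun i y => Wf u pt t y i)
    (fun i y => fderiv ℝ (fun z => Wf u pt t z i) y) ∅ Set.countable_empty
    (fun i => ((diff_Wf hu hp t i).continuous).continuousOn)
    (fun x _ i => ((diff_Wf hu hp t i) x).hasFDerivAt)
    (by rw [funext hsum]; exact hIi)
  have hface : ∀ (i : Fin 3) (c : ℝ), (c = 0 ∨ c = 1) →
      (∫ (x : Fin 2 → ℝ) in Set.Icc ((0 : Fin 3 → ℝ) ∘ i.succAbove)
        ((1 : Fin 3 → ℝ) ∘ i.succAbove), Wf u pt t (i.insertNth c x) i) = 0 := by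
    intro i c hc
    have heq : Set.EqOn (fun y : Fin 2 → ℝ => Wf u pt t (i.insertNth c y) i)
        (fun _ => (0 : ℝ))
        (Set.Icc ((0 : Fin 3 → ℝ) ∘ i.succAbove) ((1 : Fin 3 → ℝ) ∘ i.succAbove)) := by
      intro y hy
      have hmem : i.insertNth c y ∈ cube := by
        refine Fin.insertNth_mem_Icc.2 ⟨?_, ?_⟩
        · rcases hc with h | h <;> simp [h]
        · exact hy
      have hof : onFace (i.insertNth c y) i := by
        rcases hc with h | h
        · exact Or.inl (by rw [Fin.insertNth_apply_same, h])
        · exact Or.inr (by rw [Fin.insertNth_apply_same, h])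
      exact Wf_bdry_zero t hq0 htan _ hmem i hof
    rw [setIntegral_congr_fun measurableSet_Icc heq, integral_zero]
  have h1 : (∫ x in cube, vdiv (Wf u pt t) x)
      = ∫ x in Set.Icc (0 : Fin 3 → ℝ) 1,
          ∑ i : Fin 3, fderiv ℝ (fun z => Wf u pt t z i) x (Pi.single i 1) :=
    setIntegral_congr_fun measurableSet_Icc fun x _ => (hsum x).symm
  rw [h1, hdt]
  refine Finset.sum_eq_zero fun i _ => ?_
  have e1 : ((1 : Fin 3 → ℝ) i) = 1 := rfl
  have e0 : ((0 : Fin 3 → ℝ) i) = 0 := rfl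
  rw [e1, e0, hface i 1 (Or.inr rfl), hface i 0 (Or.inl rfl), sub_zero]

end EulerHelicity

/-- For the ideal (Euler) equations on the unit cube, the fluid helicity is
conserved in time. -/
theorem euler_helicity_conservation
    (u : ℝ → R3 → R3) (pt : ℝ → R3 → ℝ)
    (hu : ContDiff ℝ 2 (Function.uncurry u))
    (hp : ContDiff ℝ 1 (Function.uncurry pt))
    (hmom : ∀ t : ℝ, ∀ x ∈ cube,
      dtv u t x - cross3 (u t x) (vcurl (u t) x)
        + vgrad (fun y => (1 / 2) * dot3 (u t y) (u t y) + pt t y) x = 0)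
    (hdiv : ∀ t : ℝ, ∀ x ∈ cube, vdiv (u t) x = 0)
    (hbcu : ∀ t : ℝ, TangentialBC (u t))
    (hbcp : ∀ t : ℝ, ∀ x : R3, onBdry x →
      (1 / 2) * dot3 (u t x) (u t x) + pt t x = 0) :
    ∀ t : ℝ,
      ∫ x in cube, dot3 (u t x) (vcurl (u t) x)
        = ∫ x in cube, dot3 (u 0 x) (vcurl (u 0) x) := by

  intro t
  have hmeas : MeasurableSet cube := measurableSet_Icc
  have hcomp : IsCompact cube := isCompact_Icc
  have hder : ∀ t₀ : ℝ, HasDerivAt (fun s => ∫ x in cube, dot3 (u s x) (vcurl (u s) x))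
      (∫ x in cube, (dot3 (dtv u t₀ x) (vcurl (u t₀) x)
        + dot3 (u t₀ x) (vcurl (dtv u t₀) x))) t₀ := by
    intro t₀
    have hcphi : ∀ s : ℝ, Continuous fun x : R3 => dot3 (u s x) (vcurl (u s) x) :=
      fun s => (EulerHelicity.continuous_phi hu).comp (Continuous.prodMk_right s)
    have hcphi' : ∀ s : ℝ, Continuous fun x : R3 =>
        dot3 (dtv u s x) (vcurl (u s) x) + dot3 (u s x) (vcurl (dtv u s) x) :=
      fun s => (EulerHelicity.continuous_phi' hu).comp (Continuous.prodMk_right s)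
    obtain ⟨C, hC⟩ := (isCompact_Icc.prod hcomp).exists_bound_of_continuousOn
      ((EulerHelicity.continuous_phi' hu).continuousOn
        (s := Set.Icc (t₀ - 1) (t₀ + 1) ×ˢ cube))
    have h := hasDerivAt_integral_of_dominated_loc_of_deriv_le
      (μ := volume.restrict cube)
      (F := fun s x => dot3 (u s x) (vcurl (u s) x))
      (F' := fun s x => dot3 (dtv u s x) (vcurl (u s) x)
        + dot3 (u s x) (vcurl (dtv u s) x))
      (x₀ := t₀) (bound := fun _ => C) (s := Metric.ball t₀ 1) (Metric.ball_mem_nhds t₀ one_pos)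
      (Filter.Eventually.of_forall fun s => (hcphi s).aestronglyMeasurable)
      ((hcphi t₀).continuousOn.integrableOn_compact hcomp)
      ((hcphi' t₀).aestronglyMeasurable)
      ((ae_restrict_iff' hmeas).2 (Filter.Eventually.of_forall fun x hx s hs => by
        have hd := Metric.mem_ball.1 hs
        rw [Real.dist_eq] at hd
        have hd' := abs_lt.1 hd
        exact hC (s, x) ⟨⟨by linarith, by linarith⟩, hx⟩))
      (integrableOn_const hcomp.measure_lt_top.ne)
      (Filter.Eventually.of_forall fun x s _ => EulerHelicity.hasDerivAt_phi hu s x)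
    exact h.2
  have hzero : ∀ t₀ : ℝ, (∫ x in cube, (dot3 (dtv u t₀ x) (vcurl (u t₀) x)
      + dot3 (u t₀ x) (vcurl (dtv u t₀) x))) = 0 := by
    intro t₀
    have hcphi' : Continuous fun x : R3 =>
        dot3 (dtv u t₀ x) (vcurl (u t₀) x) + dot3 (u t₀ x) (vcurl (dtv u t₀) x) :=
      (EulerHelicity.continuous_phi' hu).comp (Continuous.prodMk_right t₀)
    have hcong : Set.EqOn (fun x => dot3 (dtv u t₀ x) (vcurl (u t₀) x)
        + dot3 (u t₀ x) (vcurl (dtv u t₀) x))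
        (fun x => vdiv (EulerHelicity.Wf u pt t₀) x) cube :=
      fun x hx => EulerHelicity.phi'_eq_divW hu hp t₀ x (hmom t₀ x hx)
    have hIi : IntegrableOn (fun x => vdiv (EulerHelicity.Wf u pt t₀) x) cube :=
      (hcphi'.continuousOn.integrableOn_compact hcomp).congr_fun hcong hmeas
    rw [setIntegral_congr_fun hmeas hcong]
    exact EulerHelicity.integral_divW hu hp t₀ (hbcp t₀) (hbcu t₀) hIi
  have hdiff : Differentiable ℝ (fun s => ∫ x in cube, dot3 (u s x) (vcurl (u s) x)) :=
    fun s => (hder s).differentiableAt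
  have hd0 : ∀ s : ℝ, deriv (fun s => ∫ x in cube, dot3 (u s x) (vcurl (u s) x)) s = 0 :=
    fun s => by rw [(hder s).deriv, hzero]
  exact is_const_of_deriv_eq_zero hdiff hd0 t 0
end
end

section
/- Let u : ℝ × ℝ³ → ℝ³ be twice continuously differentiable (jointly in (t,x)) and let p̃ : ℝ × ℝ³ → ℝ be continuously differentiable. Suppose that for all t ∈ ℝ and x ∈ Ω = [0,1]³ the ideal (Euler) equations hold: ∂ₜu − u × (curl u) + ∇(½|u|² + p̃) = 0 and div u = 0, together with the boundary conditions u × n = 0 and ½|u|² + p̃ = 0 on ∂Ω for all t. Then the kinetic energy is conserved: for every t ∈ ℝ, ∫_Ω |u(t,x)|² dx = ∫_Ω |u(0,x)|² dx. -/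
open MeasureTheory

noncomputable section

lemma dot3_cross_self (a b : R3) : dot3 a (cross3 a b) = 0 := by
  simp only [dot3, cross3]
  simp [Matrix.cons_val_zero, Matrix.cons_val_one]
  ring

lemma insertNth_mem_cube (i : Fin 3) (z : ℝ) (hz : z = 0 ∨ z = 1)
    (y : Fin 2 → ℝ) (hy : y ∈ Set.Icc ((0:R3) ∘ i.succAbove) ((1:R3) ∘ i.succAbove)) :
    onBdry (i.insertNth z y) := by
  rw [Set.mem_Icc] at hy
  refine ⟨?_, i, ?_⟩
  · rw [cube, Set.mem_Icc]
    have hmem : ∀ j, 0 ≤ (i.insertNth z y : R3) j ∧ (i.insertNth z y : R3) j ≤ 1 := by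
      intro j
      by_cases hj : j = i
      · subst hj
        rw [Fin.insertNth_apply_same]
        rcases hz with h | h <;> simp [h]
      · obtain ⟨k, rfl⟩ := Fin.exists_succAbove_eq hj
        rw [Fin.insertNth_apply_succAbove]
        exact ⟨hy.1 k, hy.2 k⟩
    exact ⟨fun j => (hmem j).1, fun j => (hmem j).2⟩
  · rw [onFace, Fin.insertNth_apply_same]
    exact hz

lemma div_integral_zero (Q : R3 → ℝ) (v : R3 → R3)
    (hQ : ContDiff ℝ 1 Q) (hv : ∀ i : Fin 3, ContDiff ℝ 1 (fun x => v x i))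
    (hQ0 : ∀ y : R3, onBdry y → Q y = 0) :
    ∫ x in cube, (dot3 (vgrad Q x) (v x) + Q x * vdiv v x) = 0 := by
  have hQvc : ∀ i : Fin 3, ContDiff ℝ 1 (fun y => Q y * v y i) := fun i => hQ.mul (hv i)
  set F' : R3 → R3 →L[ℝ] R3 :=
    fun x => ContinuousLinearMap.pi (fun i => fderiv ℝ (fun y => Q y * v y i) x) with hF'
  have hder : ∀ (x : R3), HasFDerivAt (fun x (i : Fin 3) => Q x * v x i) (F' x) x := fun x =>
    hasFDerivAt_pi.2 fun i => ((hQvc i).differentiable one_ne_zero x).hasFDerivAt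
  have hdivpt : ∀ x : R3, (∑ i, F' x (Pi.single i 1) i)
      = dot3 (vgrad Q x) (v x) + Q x * vdiv v x := by
    intro x
    have hm : ∀ i : Fin 3, fderiv ℝ (fun y => Q y * v y i) x (Pi.single i 1)
        = Q x * fderiv ℝ (fun y => v y i) x (Pi.single i 1)
          + v x i * fderiv ℝ Q x (Pi.single i 1) := by
      intro i
      rw [fderiv_fun_mul (hQ.differentiable one_ne_zero x) ((hv i).differentiable one_ne_zero x)]
      simp
    simp only [hF', ContinuousLinearMap.pi_apply, Fin.sum_univ_three, hm]
    simp only [dot3, vgrad, vdiv, pd]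
    ring
  have hcont : Continuous fun x => ∑ i, F' x (Pi.single i 1) i := by
    simp only [hF', ContinuousLinearMap.pi_apply]
    apply continuous_finset_sum
    intro i _
    exact ((hQvc i).continuous_fderiv one_ne_zero).clm_apply continuous_const
  have Hi : IntegrableOn (fun x => ∑ i, F' x (Pi.single i 1) i) (Set.Icc (0:R3) 1) :=
    hcont.continuousOn.integrableOn_compact isCompact_Icc
  have Hc : ContinuousOn (fun x (i : Fin 3) => Q x * v x i) (Set.Icc (0:R3) 1) :=
    (continuous_pi fun i => (hQvc i).continuous).continuousOn
  have hthm := integral_divergence_of_hasFDerivAt_off_countable (n := 2)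
      (a := (0:R3)) (b := 1) (fun i => zero_le_one) (fun x (i : Fin 3) => Q x * v x i) F' ∅
      Set.countable_empty Hc (fun x _ => hder x) Hi
  have : ∫ x in cube, (dot3 (vgrad Q x) (v x) + Q x * vdiv v x)
      = ∫ x in Set.Icc (0:R3) 1, ∑ i, F' x (Pi.single i 1) i := by
    rw [cube]
    exact setIntegral_congr_fun measurableSet_Icc (fun x _ => (hdivpt x).symm)
  rw [this, hthm]
  apply Finset.sum_eq_zero
  intro i _
  have h1 : Set.EqOn (fun y => (fun x (i : Fin 3) => Q x * v x i) (i.insertNth ((1:R3) i) y) i)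
      (fun _ => (0:ℝ)) (Set.Icc ((0:R3) ∘ i.succAbove) ((1:R3) ∘ i.succAbove)) := by
    intro y hy
    have := hQ0 _ (insertNth_mem_cube i ((1:R3) i) (Or.inr (Pi.one_apply i)) y hy)
    simp only [this, zero_mul]
  have h0 : Set.EqOn (fun y => (fun x (i : Fin 3) => Q x * v x i) (i.insertNth ((0:R3) i) y) i)
      (fun _ => (0:ℝ)) (Set.Icc ((0:R3) ∘ i.succAbove) ((1:R3) ∘ i.succAbove)) := by
    intro y hy
    have := hQ0 _ (insertNth_mem_cube i ((0:R3) i) (Or.inl (Pi.zero_apply i)) y hy)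
    simp only [this, zero_mul]
  rw [setIntegral_congr_fun measurableSet_Icc h1, setIntegral_congr_fun measurableSet_Icc h0]
  simp
/-- For the ideal (Euler) equations on the unit cube, the kinetic energy is
conserved in time. -/
theorem euler_energy_conservation
    (u : ℝ → R3 → R3) (pt : ℝ → R3 → ℝ)
    (hu : ContDiff ℝ 2 (Function.uncurry u))
    (hp : ContDiff ℝ 1 (Function.uncurry pt))
    (hmom : ∀ t : ℝ, ∀ x ∈ cube,
      dtv u t x - cross3 (u t x) (vcurl (u t) x)
        + vgrad (fun y => (1 / 2) * dot3 (u t y) (u t y) + pt t y) x = 0)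
    (hdiv : ∀ t : ℝ, ∀ x ∈ cube, vdiv (u t) x = 0)
    (hbcu : ∀ t : ℝ, TangentialBC (u t))
    (hbcp : ∀ t : ℝ, ∀ x : R3, onBdry x →
      (1 / 2) * dot3 (u t x) (u t x) + pt t x = 0) :
    ∀ t : ℝ,
      ∫ x in cube, dot3 (u t x) (u t x) = ∫ x in cube, dot3 (u 0 x) (u 0 x) := by
  -- component regularity
  have hui : ∀ i : Fin 3, ContDiff ℝ 2 (fun p : ℝ × R3 => u p.1 p.2 i) := fun i =>
    (contDiff_pi.1 hu) i
  have hslice : ∀ t : ℝ, ContDiff ℝ 2 (fun x : R3 => ((t, x) : ℝ × R3)) := fun t =>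
    contDiff_const.prodMk contDiff_id
  have huti : ∀ (t : ℝ) (i : Fin 3), ContDiff ℝ 2 (fun x => u t x i) := fun t i =>
    (hui i).comp (hslice t)
  -- the energy density as a function on ℝ × R3
  have hG : ContDiff ℝ 1 (fun p : ℝ × R3 => dot3 (u p.1 p.2) (u p.1 p.2)) := by
    simp only [dot3]
    exact ((((hui 0).mul (hui 0)).add ((hui 1).mul (hui 1))).add
      ((hui 2).mul (hui 2))).of_le one_le_two
  set φ : ℝ × R3 → ℝ :=
    fun p => fderiv ℝ (fun q : ℝ × R3 => dot3 (u q.1 q.2) (u q.1 q.2)) p ((1:ℝ), (0:R3))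
    with hφdef
  have hφcont : Continuous φ := by
    rw [hφdef]
    exact (hG.continuous_fderiv one_ne_zero).clm_apply continuous_const
  have hφderiv : ∀ (t : ℝ) (x : R3),
      HasDerivAt (fun s => dot3 (u s x) (u s x)) (φ (t, x)) t := by
    intro t x
    have h1 : HasDerivAt (fun s : ℝ => ((s, x) : ℝ × R3)) ((1:ℝ), (0:R3)) t :=
      (hasDerivAt_id t).prodMk (hasDerivAt_const t x)
    exact ((hG.differentiable one_ne_zero (t, x)).hasFDerivAt).comp_hasDerivAt t h1
  -- second expression of φ via dtv
  have hφ2 : ∀ (t : ℝ) (x : R3), φ (t, x) = 2 * dot3 (u t x) (dtv u t x) := by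
    intro t x
    have hd : ∀ i : Fin 3, HasDerivAt (fun s => u s x i) (dtv u t x i) t := by
      intro i
      have hdiff : DifferentiableAt ℝ (fun s => u s x i) t := by
        have := (((hui i).differentiable two_ne_zero) (t, x)).comp t
          (((differentiableAt_id (𝕜 := ℝ) (x := t)).prodMk (differentiableAt_const (𝕜 := ℝ) (x := t) x)))
        exact this
      exact hdiff.hasDerivAt
    have hsum : HasDerivAt (fun s => dot3 (u s x) (u s x))
        (2 * dot3 (u t x) (dtv u t x)) t := by
      simp only [dot3]
      have h := (((hd 0).fun_mul (hd 0)).fun_add ((hd 1).fun_mul (hd 1))).fun_add ((hd 2).fun_mul (hd 2))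
      exact h.congr_deriv (by ring)
    exact (hφderiv t x).unique hsum
  -- the derivative of the energy
  have key : ∀ t₀ : ℝ, HasDerivAt (fun s => ∫ x in cube, dot3 (u s x) (u s x))
      (∫ x in cube, φ (t₀, x)) t₀ := by
    intro t₀
    obtain ⟨C, hC⟩ : ∃ C, ∀ p ∈ (Set.Icc (t₀ - 1) (t₀ + 1)) ×ˢ cube, ‖φ p‖ ≤ C :=
      (isCompact_Icc.prod isCompact_Icc).exists_bound_of_continuousOn hφcont.continuousOn
    have hgc : ∀ s : ℝ, Continuous fun x => dot3 (u s x) (u s x) := fun s =>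
      hG.continuous.comp (continuous_const.prodMk continuous_id)
    have h := hasDerivAt_integral_of_dominated_loc_of_deriv_le
      (μ := volume.restrict cube) (x₀ := t₀) (s := Metric.ball t₀ 1)
      (F := fun s x => dot3 (u s x) (u s x)) (F' := fun s x => φ (s, x))
      (bound := fun _ => C) (Metric.ball_mem_nhds t₀ one_pos)
      (Filter.Eventually.of_forall fun s => (hgc s).aestronglyMeasurable)
      (((hgc t₀).continuousOn.integrableOn_compact (isCompact_Icc)))
      ((hφcont.comp (continuous_const.prodMk continuous_id)).aestronglyMeasurable)
      ?_ ?_ ?_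
    · exact h.2
    · refine ae_restrict_of_forall_mem measurableSet_Icc ?_
      intro x hx s hs
      rw [Real.ball_eq_Ioo] at hs
      exact hC (s, x) ⟨⟨le_of_lt hs.1, le_of_lt hs.2⟩, hx⟩
    · exact integrableOn_const isCompact_Icc.measure_lt_top.ne
    · exact Filter.Eventually.of_forall fun x s _ => hφderiv s x
  -- the derivative vanishes
  have zero : ∀ t₀ : ℝ, (∫ x in cube, φ (t₀, x)) = 0 := by
    intro t₀
    set Q : R3 → ℝ := fun y => (1 / 2) * dot3 (u t₀ y) (u t₀ y) + pt t₀ y with hQdef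
    have hQc : ContDiff ℝ 1 Q := by
      rw [hQdef]
      simp only [dot3]
      refine ContDiff.add (contDiff_const.mul ?_) (hp.comp ((hslice t₀).of_le one_le_two))
      exact (((((huti t₀ 0).mul (huti t₀ 0)).add ((huti t₀ 1).mul (huti t₀ 1))).add
        ((huti t₀ 2).mul (huti t₀ 2))).of_le one_le_two)
    have hint := div_integral_zero Q (u t₀) hQc
      (fun i => (huti t₀ i).of_le one_le_two) (fun y hy => hbcp t₀ y hy)
    have heq : Set.EqOn (fun x => φ (t₀, x))
        (fun x => (-2 : ℝ) * (dot3 (vgrad Q x) (u t₀ x) + Q x * vdiv (u t₀) x)) cube := by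
      intro x hx
      have hi : ∀ i : Fin 3, dtv u t₀ x i
          = cross3 (u t₀ x) (vcurl (u t₀) x) i - vgrad Q x i := by
        intro i
        have h := congrFun (hmom t₀ x hx) i
        rw [hQdef]
        simp only [Pi.add_apply, Pi.sub_apply, Pi.zero_apply] at h
        linarith
      have hcr := dot3_cross_self (u t₀ x) (vcurl (u t₀) x)
      simp only []
      rw [hφ2 t₀ x, hdiv t₀ x hx, mul_zero, add_zero]
      simp only [dot3] at hcr ⊢
      rw [hi 0, hi 1, hi 2]
      linear_combination (2:ℝ) * hcr
    calc (∫ x in cube, φ (t₀, x))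
        = ∫ x in cube, (-2 : ℝ) * (dot3 (vgrad Q x) (u t₀ x) + Q x * vdiv (u t₀) x) :=
          setIntegral_congr_fun measurableSet_Icc heq
      _ = (-2 : ℝ) * ∫ x in cube, (dot3 (vgrad Q x) (u t₀ x) + Q x * vdiv (u t₀) x) :=
          integral_const_mul _ _
      _ = 0 := by rw [hint, mul_zero]
  -- conclude
  intro t
  have hE : Differentiable ℝ (fun s => ∫ x in cube, dot3 (u s x) (u s x)) := fun s =>
    (key s).differentiableAt
  have hE' : ∀ s, deriv (fun s => ∫ x in cube, dot3 (u s x) (u s x)) s = 0 := fun s => by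
    rw [(key s).deriv, zero s]
  exact is_const_of_deriv_eq_zero hE hE' t 0
end
end

section
/- Let Re > 0, let u : ℝ × ℝ³ → ℝ³ be twice continuously differentiable (jointly in (t,x)) and let p̃ : ℝ × ℝ³ → ℝ be continuously differentiable. Suppose that for all t ∈ ℝ and x ∈ Ω = [0,1]³ the unforced Lamb-form Navier–Stokes equations hold: ∂ₜu − u × (curl u) + Re⁻¹ curl(curl u) + ∇(½|u|² + p̃) = 0 and div u = 0, together with the boundary conditions u × n = 0 and ½|u|² + p̃ = 0 on ∂Ω for all t. Then for every T ≥ 0 the energy balance equality holds: ½ ∫_Ω |u(T,x)|² dx + Re⁻¹ ∫₀ᵀ ( ∫_Ω |curl u(t,·)(x)|² dx ) dt = ½ ∫_Ω |u(0,x)|² dx; in particular ∫_Ω |u(T,x)|² dx ≤ ∫_Ω |u(0,x)|² dx for all T ≥ 0. -/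
open MeasureTheory

noncomputable section

/-! ### Auxiliary lemmas -/

lemma NS_pd_congr {f g : R3 → ℝ} (h : ∀ y, f y = g y) (i : Fin 3) (x : R3) :
    pd i f x = pd i g x := by
  have : f = g := funext h
  rw [this]

lemma NS_pd_sub {f g : R3 → ℝ} {x : R3} (hf : DifferentiableAt ℝ f x)
    (hg : DifferentiableAt ℝ g x) (i : Fin 3) :
    pd i (fun y => f y - g y) x = pd i f x - pd i g x := by
  unfold pd; rw [fderiv_fun_sub hf hg]; rfl

lemma NS_pd_mul {f g : R3 → ℝ} {x : R3} (hf : DifferentiableAt ℝ f x)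
    (hg : DifferentiableAt ℝ g x) (i : Fin 3) :
    pd i (fun y => f y * g y) x = pd i f x * g x + f x * pd i g x := by
  unfold pd; rw [fderiv_fun_mul hf hg]
  simp only [ContinuousLinearMap.add_apply, ContinuousLinearMap.smul_apply, smul_eq_mul]
  ring

lemma NS_pd_comp_apply {v : R3 → R3} {x : R3} (hv : DifferentiableAt ℝ v x) (i k : Fin 3) :
    pd i (fun y => v y k) x = fderiv ℝ v x (Pi.single i 1) k := by
  unfold pd
  have h : HasFDerivAt (fun y => v y k)
      ((ContinuousLinearMap.proj k).comp (fderiv ℝ v x)) x :=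
    (ContinuousLinearMap.proj (R := ℝ) (φ := fun _ : Fin 3 => ℝ) k).hasFDerivAt.comp x
      hv.hasFDerivAt
  rw [h.fderiv]; rfl

lemma NS_cube_compact : IsCompact cube := isCompact_Icc
lemma NS_cube_meas : MeasurableSet cube := measurableSet_Icc
lemma NS_cube_vol : volume cube < ⊤ := NS_cube_compact.measure_lt_top

/-! ### Divergence theorem on the cube -/

lemma NS_integral_vdiv_eq_zero {F : R3 → R3} (hF : ContDiff ℝ 1 F)
    (hbc : ∀ x ∈ cube, ∀ i : Fin 3, onFace x i → F x i = 0) :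
    ∫ x in cube, vdiv F x = 0 := by
  have hdF : Differentiable ℝ F := hF.differentiable (by norm_num)
  have hdiveq : ∀ x : R3, (∑ i : Fin 3, fderiv ℝ F x (Pi.single i 1) i) = vdiv F x := by
    intro x
    rw [Fin.sum_univ_three, vdiv, NS_pd_comp_apply (hdF x), NS_pd_comp_apply (hdF x),
      NS_pd_comp_apply (hdF x)]
  have key := MeasureTheory.integral_divergence_of_hasFDerivAt_off_countable
    (n := 2) (0 : R3) 1 (by intro i; norm_num) F (fun x => fderiv ℝ F x) ∅
    Set.countable_empty (hF.continuous.continuousOn)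
    (fun x _ => (hdF x).hasFDerivAt)
    (by
      have : ContinuousOn (fun x => ∑ i : Fin 3, fderiv ℝ F x (Pi.single i 1) i)
          (Set.Icc (0:R3) 1) := by
        apply Continuous.continuousOn
        have h1 : Continuous (fun x => fderiv ℝ F x) := hF.continuous_fderiv (by norm_num)
        exact continuous_finset_sum _ fun i _ =>
          (continuous_apply i).comp
            ((ContinuousLinearMap.apply ℝ R3 (Pi.single i 1)).continuous.comp h1)
      exact this.integrableOn_compact isCompact_Icc)
  rw [show (∫ x in cube, vdiv F x) = ∫ x in Set.Icc (0:R3) 1,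
        ∑ i : Fin 3, fderiv ℝ F x (Pi.single i 1) i from by
      rw [cube]; exact (setIntegral_congr_fun measurableSet_Icc
        (fun x _ => (hdiveq x).symm))]
  rw [key]
  apply Finset.sum_eq_zero
  intro i _
  have hmem : ∀ (c : ℝ), c ∈ Set.Icc (0:ℝ) 1 →
      ∀ y ∈ Set.Icc ((0:R3) ∘ i.succAbove) ((1:R3) ∘ i.succAbove),
      (i.insertNth c y : R3) ∈ cube ∧ (i.insertNth c y : R3) i = c := by
    intro c hc y hy
    constructor
    · rw [cube]
      rw [Fin.insertNth_mem_Icc]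
      exact ⟨hc, hy⟩
    · simp
  have hz : ∀ (c : ℝ), c ∈ Set.Icc (0:ℝ) 1 → (c = 0 ∨ c = 1) →
      (∫ y in Set.Icc ((0:R3) ∘ i.succAbove) ((1:R3) ∘ i.succAbove),
        F (i.insertNth c y) i) = 0 := by
    intro c hc hc01
    rw [setIntegral_congr_fun measurableSet_Icc (g := fun _ => (0:ℝ))
      (fun y hy => by
        obtain ⟨hmem1, hmem2⟩ := hmem c hc y hy
        exact hbc _ hmem1 i (by rw [onFace, hmem2]; exact hc01))]
    simp
  simp only [Pi.one_apply, Pi.zero_apply]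
  rw [hz 1 (by norm_num) (Or.inr rfl), hz 0 (by norm_num) (Or.inl rfl), sub_zero]

/-! ### Parametric integrals over the cube -/

lemma NS_cont_integral_cube {f : ℝ → R3 → ℝ} (hf : Continuous fun p : ℝ × R3 => f p.1 p.2) :
    Continuous fun t => ∫ x in cube, f t x := by
  rw [continuous_iff_continuousAt]
  intro t₀
  obtain ⟨C, hC⟩ := (isCompact_Icc (a := t₀ - 1) (b := t₀ + 1)).prod NS_cube_compact
    |>.exists_bound_of_continuousOn hf.continuousOn
  apply MeasureTheory.continuousAt_of_dominated (bound := fun _ => C)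
  · filter_upwards with t
    exact (hf.comp (continuous_const.prodMk continuous_id)).aestronglyMeasurable
  · filter_upwards [Icc_mem_nhds (by linarith : t₀ - 1 < t₀) (by linarith : t₀ < t₀ + 1)]
      with t ht
    filter_upwards [ae_restrict_mem NS_cube_meas] with x hx
    exact hC (t, x) ⟨ht, hx⟩
  · exact (integrableOn_const NS_cube_vol.ne)
  · exact Filter.Eventually.of_forall fun x =>
      (hf.comp (continuous_id.prodMk continuous_const)).continuousAt

lemma NS_hasDerivAt_integral_cube {f f' : ℝ → R3 → ℝ}
    (hf : Continuous fun p : ℝ × R3 => f p.1 p.2)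
    (hf' : Continuous fun p : ℝ × R3 => f' p.1 p.2)
    (hd : ∀ t x, HasDerivAt (fun s => f s x) (f' t x) t) (t₀ : ℝ) :
    HasDerivAt (fun t => ∫ x in cube, f t x) (∫ x in cube, f' t₀ x) t₀ := by
  obtain ⟨C, hC⟩ := (isCompact_Icc (a := t₀ - 1) (b := t₀ + 1)).prod NS_cube_compact
    |>.exists_bound_of_continuousOn hf'.continuousOn
  have key := hasDerivAt_integral_of_dominated_loc_of_deriv_le
    (F := fun t x => f t x) (F' := fun t x => f' t x) (μ := volume.restrict cube)
    (bound := fun _ => C) (s := Metric.ball t₀ 1) (x₀ := t₀) (Metric.ball_mem_nhds t₀ one_pos)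
    (Filter.Eventually.of_forall fun t =>
      (hf.comp (continuous_const.prodMk continuous_id)).aestronglyMeasurable)
    (((hf.comp (continuous_const.prodMk continuous_id)).continuousOn
      (s := cube)).integrableOn_compact NS_cube_compact)
    ((hf'.comp (continuous_const.prodMk continuous_id)).aestronglyMeasurable)
    ?_ (integrableOn_const NS_cube_vol.ne)
    (Filter.Eventually.of_forall fun x t _ => hd t x)
  · exact key.2
  · filter_upwards [ae_restrict_mem NS_cube_meas] with x hx
    intro t ht
    have ht' : t ∈ Set.Icc (t₀ - 1) (t₀ + 1) := by
      have := Metric.mem_ball.mp ht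
      rw [Real.dist_eq] at this
      constructor <;> [linarith [abs_lt.mp this |>.1]; linarith [abs_lt.mp this |>.2]]
    exact hC (t, x) ⟨ht', hx⟩

/-! ### Joint regularity -/

section JointRegularity
variable {u : ℝ → R3 → R3} (hu : ContDiff ℝ 2 (Function.uncurry u))
include hu

lemma NS_slice_contDiff (t : ℝ) : ContDiff ℝ 2 (u t) :=
  hu.comp ((contDiff_const (c := t)).prodMk contDiff_id)

lemma NS_joint_fderiv_contDiff :
    ContDiff ℝ 1 fun p : ℝ × R3 => fderiv ℝ (u p.1) p.2 := by
  have h : ContDiff ℝ 2 (Function.uncurry fun (p : ℝ × R3) (y : R3) => u p.1 y) := by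
    exact hu.comp ((contDiff_fst.comp contDiff_fst).prodMk contDiff_snd)
  exact h.fderiv (contDiff_snd) (by norm_num)

lemma NS_pd_joint_cont (j k : Fin 3) :
    Continuous fun p : ℝ × R3 => pd j (fun y => u p.1 y k) p.2 := by
  have he : (fun p : ℝ × R3 => pd j (fun y => u p.1 y k) p.2)
      = fun p => fderiv ℝ (u p.1) p.2 (Pi.single j 1) k :=
    funext fun p =>
      NS_pd_comp_apply (((NS_slice_contDiff hu p.1).differentiable (by norm_num)) p.2) j k
  rw [he]
  exact (continuous_apply k).comp
    ((ContinuousLinearMap.apply ℝ R3 (Pi.single j 1)).continuous.comp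
      (NS_joint_fderiv_contDiff hu).continuous)

lemma NS_curlsq_joint_cont :
    Continuous fun p : ℝ × R3 => dot3 (vcurl (u p.1) p.2) (vcurl (u p.1) p.2) := by
  simp only [dot3, vcurl, Matrix.cons_val_zero, Matrix.cons_val_one, Matrix.head_cons,
    Matrix.cons_val_two, Matrix.tail_cons]
  have c12 := NS_pd_joint_cont hu 1 2
  have c21 := NS_pd_joint_cont hu 2 1
  have c20 := NS_pd_joint_cont hu 2 0
  have c02 := NS_pd_joint_cont hu 0 2
  have c01 := NS_pd_joint_cont hu 0 1
  have c10 := NS_pd_joint_cont hu 1 0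
  exact (((c12.sub c21).mul (c12.sub c21)).add
    ((c20.sub c02).mul (c20.sub c02))).add ((c01.sub c10).mul (c01.sub c10))

lemma NS_hasDerivAt_slice (t : ℝ) (x : R3) (i : Fin 3) :
    HasDerivAt (fun s => u s x i) (fderiv ℝ (Function.uncurry u) (t, x) (1, 0) i) t := by
  have hF : HasFDerivAt (Function.uncurry u) (fderiv ℝ (Function.uncurry u) (t, x)) (t, x) :=
    ((hu.differentiable (by norm_num)) (t, x)).hasFDerivAt
  have hline : HasDerivAt (fun s : ℝ => (s, x)) ((1 : ℝ), (0 : R3)) t := by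
    exact (hasDerivAt_id t).prodMk (hasDerivAt_const t x)
  have h2 : HasDerivAt (fun s => u s x) (fderiv ℝ (Function.uncurry u) (t, x) (1, 0)) t :=
    by have h := hF.comp_hasDerivAt t hline; exact h
  exact (ContinuousLinearMap.proj (R := ℝ)
    (φ := fun _ : Fin 3 => ℝ) i).hasFDerivAt.comp_hasDerivAt t h2

lemma NS_dtv_eq (t : ℝ) (x : R3) (i : Fin 3) :
    dtv u t x i = fderiv ℝ (Function.uncurry u) (t, x) (1, 0) i :=
  (NS_hasDerivAt_slice hu t x i).deriv

lemma NS_dtv_joint_cont (i : Fin 3) :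
    Continuous fun p : ℝ × R3 => dtv u p.1 p.2 i := by
  have he : (fun p : ℝ × R3 => dtv u p.1 p.2 i)
      = fun p => fderiv ℝ (Function.uncurry u) p (1, 0) i :=
    funext fun p => NS_dtv_eq hu p.1 p.2 i
  rw [he]
  exact (continuous_apply i).comp
    ((ContinuousLinearMap.apply ℝ (R3) ((1 : ℝ), (0 : R3))).continuous.comp
      (hu.fderiv_right (m := 1) (by norm_num)).continuous)

lemma NS_hasDerivAt_energy_density (t : ℝ) (x : R3) :
    HasDerivAt (fun s => dot3 (u s x) (u s x)) (2 * dot3 (u t x) (dtv u t x)) t := by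
  have h : ∀ i, HasDerivAt (fun s => u s x i) (dtv u t x i) t := fun i => by
    rw [NS_dtv_eq hu t x i]; exact NS_hasDerivAt_slice hu t x i
  have H := (((h 0).mul (h 0)).add ((h 1).mul (h 1))).add ((h 2).mul (h 2))
  have heq : (2 : ℝ) * dot3 (u t x) (dtv u t x)
      = dtv u t x 0 * u t x 0 + u t x 0 * dtv u t x 0
        + (dtv u t x 1 * u t x 1 + u t x 1 * dtv u t x 1)
        + (dtv u t x 2 * u t x 2 + u t x 2 * dtv u t x 2) := by
    simp [dot3]; ring
  rw [heq]
  exact H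

lemma NS_usq_joint_cont :
    Continuous fun p : ℝ × R3 => dot3 (u p.1 p.2) (u p.1 p.2) := by
  have h : ∀ i : Fin 3, Continuous fun p : ℝ × R3 => u p.1 p.2 i := fun i =>
    (continuous_apply i).comp hu.continuous
  simp only [dot3]
  exact (((h 0).mul (h 0)).add ((h 1).mul (h 1))).add ((h 2).mul (h 2))

lemma NS_udotdtv_joint_cont :
    Continuous fun p : ℝ × R3 => 2 * dot3 (u p.1 p.2) (dtv u p.1 p.2) := by
  have h : ∀ i : Fin 3, Continuous fun p : ℝ × R3 => u p.1 p.2 i := fun i =>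
    (continuous_apply i).comp hu.continuous
  have h2 := NS_dtv_joint_cont hu
  simp only [dot3]
  exact continuous_const.mul
    ((((h 0).mul (h2 0)).add ((h 1).mul (h2 1))).add ((h 2).mul (h2 2)))

end JointRegularity

/-! ### Spatial identities -/

lemma NS_cross_comp0 (v : R3 → R3) (y : R3) : cross3 (v y) (vcurl v y) 0
    = v y 1 * (pd 0 (fun z => v z 1) y - pd 1 (fun z => v z 0) y)
      - v y 2 * (pd 2 (fun z => v z 0) y - pd 0 (fun z => v z 2) y) := by
  simp [cross3, vcurl]

lemma NS_cross_comp1 (v : R3 → R3) (y : R3) : cross3 (v y) (vcurl v y) 1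
    = v y 2 * (pd 1 (fun z => v z 2) y - pd 2 (fun z => v z 1) y)
      - v y 0 * (pd 0 (fun z => v z 1) y - pd 1 (fun z => v z 0) y) := by
  simp [cross3, vcurl]

lemma NS_cross_comp2 (v : R3 → R3) (y : R3) : cross3 (v y) (vcurl v y) 2
    = v y 0 * (pd 2 (fun z => v z 0) y - pd 0 (fun z => v z 2) y)
      - v y 1 * (pd 1 (fun z => v z 2) y - pd 2 (fun z => v z 1) y) := by
  simp [cross3, vcurl]

section SpatialIdentities
variable {v : R3 → R3} (hv : ContDiff ℝ 2 v)
include hv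

lemma NS_comp_contDiff (k : Fin 3) : ContDiff ℝ 2 fun y => v y k :=
  (ContinuousLinearMap.proj (R := ℝ) (φ := fun _ : Fin 3 => ℝ) k).contDiff.comp hv

lemma NS_dv_contDiff (j k : Fin 3) : ContDiff ℝ 1 fun x => pd j (fun y => v y k) x :=
  ContDiff.clm_apply
    ((NS_comp_contDiff hv k).fderiv_right (m := 1) (by norm_num)) contDiff_const

lemma NS_vdiv_cross_eq (x : R3) :
    vdiv (fun y => cross3 (v y) (vcurl v y)) x
      = dot3 (vcurl v x) (vcurl v x) - dot3 (v x) (vcurl (vcurl v) x) := by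
  have dV : ∀ k : Fin 3, Differentiable ℝ fun y => v y k := fun k =>
    (NS_comp_contDiff hv k).differentiable (by norm_num)
  have dW : ∀ j k : Fin 3, Differentiable ℝ fun x => pd j (fun y => v y k) x := fun j k =>
    (NS_dv_contDiff hv j k).differentiable (by norm_num)
  have P : ∀ i m j₁ k₁ j₂ k₂ : Fin 3,
      pd i (fun y => v y m * (pd j₁ (fun z => v z k₁) y - pd j₂ (fun z => v z k₂) y)) x
        = pd i (fun y => v y m) x * (pd j₁ (fun z => v z k₁) x - pd j₂ (fun z => v z k₂) x)
          + v x m * (pd i (fun y => pd j₁ (fun z => v z k₁) y) x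
            - pd i (fun y => pd j₂ (fun z => v z k₂) y) x) := by
    intro i m j₁ k₁ j₂ k₂
    rw [NS_pd_mul (dV m x) (((dW j₁ k₁) x).fun_sub ((dW j₂ k₂) x)) i,
      NS_pd_sub ((dW j₁ k₁) x) ((dW j₂ k₂) x) i]
  have Q : ∀ i j₁ k₁ j₂ k₂ : Fin 3,
      pd i (fun y => pd j₁ (fun z => v z k₁) y - pd j₂ (fun z => v z k₂) y) x
        = pd i (fun y => pd j₁ (fun z => v z k₁) y) x
          - pd i (fun y => pd j₂ (fun z => v z k₂) y) x := fun i j₁ k₁ j₂ k₂ =>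
    NS_pd_sub ((dW j₁ k₁) x) ((dW j₂ k₂) x) i
  unfold vdiv
  rw [NS_pd_congr (NS_cross_comp0 v) 0 x, NS_pd_congr (NS_cross_comp1 v) 1 x,
    NS_pd_congr (NS_cross_comp2 v) 2 x]
  rw [NS_pd_sub ((dV 1 x).fun_mul (((dW 0 1) x).fun_sub ((dW 1 0) x)))
        ((dV 2 x).fun_mul (((dW 2 0) x).fun_sub ((dW 0 2) x))) 0,
      NS_pd_sub ((dV 2 x).fun_mul (((dW 1 2) x).fun_sub ((dW 2 1) x)))
        ((dV 0 x).fun_mul (((dW 0 1) x).fun_sub ((dW 1 0) x))) 1,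
      NS_pd_sub ((dV 0 x).fun_mul (((dW 2 0) x).fun_sub ((dW 0 2) x)))
        ((dV 1 x).fun_mul (((dW 1 2) x).fun_sub ((dW 2 1) x))) 2]
  rw [P 0 1 0 1 1 0, P 0 2 2 0 0 2, P 1 2 1 2 2 1, P 1 0 0 1 1 0, P 2 0 2 0 0 2,
    P 2 1 1 2 2 1]
  simp only [dot3, vcurl, Matrix.cons_val_zero, Matrix.cons_val_one, Matrix.head_cons,
    Matrix.cons_val_two, Matrix.tail_cons]
  rw [Q 1 0 1 1 0, Q 2 2 0 0 2, Q 2 1 2 2 1, Q 0 0 1 1 0, Q 0 2 0 0 2, Q 1 1 2 2 1]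
  ring

lemma NS_vdiv_smul_eq {p : R3 → ℝ} (hp : Differentiable ℝ p) (x : R3) :
    vdiv (fun y => fun i => p y * v y i) x
      = dot3 (vgrad p x) (v x) + p x * vdiv v x := by
  have dV : ∀ k : Fin 3, Differentiable ℝ fun y => v y k := fun k =>
    (NS_comp_contDiff hv k).differentiable (by norm_num)
  unfold vdiv
  rw [show (fun y => (fun i => p y * v y i) 0) = fun y => p y * v y 0 from rfl,
    show (fun y => (fun i => p y * v y i) 1) = fun y => p y * v y 1 from rfl,
    show (fun y => (fun i => p y * v y i) 2) = fun y => p y * v y 2 from rfl]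
  rw [NS_pd_mul (hp x) (dV 0 x) 0, NS_pd_mul (hp x) (dV 1 x) 1, NS_pd_mul (hp x) (dV 2 x) 2]
  simp only [dot3, vgrad]
  ring

lemma NS_cross_contDiff : ContDiff ℝ 1 fun y => cross3 (v y) (vcurl v y) := by
  have hc : ∀ k : Fin 3, ContDiff ℝ 1 fun y => v y k := fun k =>
    (NS_comp_contDiff hv k).of_le (by norm_num)
  rw [contDiff_pi]
  intro i
  fin_cases i
  · show ContDiff ℝ 1 fun y => cross3 (v y) (vcurl v y) 0
    rw [show (fun y => cross3 (v y) (vcurl v y) 0)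
        = fun y => v y 1 * (pd 0 (fun z => v z 1) y - pd 1 (fun z => v z 0) y)
          - v y 2 * (pd 2 (fun z => v z 0) y - pd 0 (fun z => v z 2) y) from
        funext fun y => NS_cross_comp0 v y]
    exact ((hc 1).mul ((NS_dv_contDiff hv 0 1).sub (NS_dv_contDiff hv 1 0))).sub
      ((hc 2).mul ((NS_dv_contDiff hv 2 0).sub (NS_dv_contDiff hv 0 2)))
  · show ContDiff ℝ 1 fun y => cross3 (v y) (vcurl v y) 1
    rw [show (fun y => cross3 (v y) (vcurl v y) 1)
        = fun y => v y 2 * (pd 1 (fun z => v z 2) y - pd 2 (fun z => v z 1) y)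
          - v y 0 * (pd 0 (fun z => v z 1) y - pd 1 (fun z => v z 0) y) from
        funext fun y => NS_cross_comp1 v y]
    exact ((hc 2).mul ((NS_dv_contDiff hv 1 2).sub (NS_dv_contDiff hv 2 1))).sub
      ((hc 0).mul ((NS_dv_contDiff hv 0 1).sub (NS_dv_contDiff hv 1 0)))
  · show ContDiff ℝ 1 fun y => cross3 (v y) (vcurl v y) 2
    rw [show (fun y => cross3 (v y) (vcurl v y) 2)
        = fun y => v y 0 * (pd 2 (fun z => v z 0) y - pd 0 (fun z => v z 2) y)
          - v y 1 * (pd 1 (fun z => v z 2) y - pd 2 (fun z => v z 1) y) from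
        funext fun y => NS_cross_comp2 v y]
    exact ((hc 0).mul ((NS_dv_contDiff hv 2 0).sub (NS_dv_contDiff hv 0 2))).sub
      ((hc 1).mul ((NS_dv_contDiff hv 1 2).sub (NS_dv_contDiff hv 2 1)))

end SpatialIdentities

lemma NS_vdiv_cont {F : R3 → R3} (hF : ContDiff ℝ 1 F) : Continuous fun x => vdiv F x := by
  have h : ∀ j k : Fin 3, Continuous fun x => pd j (fun y => F y k) x := by
    intro j k
    show Continuous fun x => fderiv ℝ (fun y => F y k) x (Pi.single j 1)
    have hFk : ContDiff ℝ 1 fun y => F y k :=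
      (ContinuousLinearMap.proj (R := ℝ) (φ := fun _ : Fin 3 => ℝ) k).contDiff.comp hF
    exact (ContDiff.clm_apply (hFk.fderiv_right (m := 0) (by norm_num))
      contDiff_const).continuous
  exact ((h 0 0).add (h 1 1)).add (h 2 2)

/-- Energy balance (energy-norm stability) for the unforced Lamb-form
Navier–Stokes equations on the unit cube: for every T ≥ 0,
½∫|u(T)|² + Re⁻¹∫₀ᵀ∫|curl u|² = ½∫|u(0)|², and in particular
∫|u(T)|² ≤ ∫|u(0)|². -/
theorem navier_stokes_energy_balance (Re : ℝ) (hRe : 0 < Re)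
    (u : ℝ → R3 → R3) (pt : ℝ → R3 → ℝ)
    (hu : ContDiff ℝ 2 (Function.uncurry u))
    (hp : ContDiff ℝ 1 (Function.uncurry pt))
    (hmom : ∀ t : ℝ, ∀ x ∈ cube,
      dtv u t x - cross3 (u t x) (vcurl (u t) x) + Re⁻¹ • vcurl (vcurl (u t)) x
        + vgrad (fun y => (1 / 2) * dot3 (u t y) (u t y) + pt t y) x = 0)
    (hdiv : ∀ t : ℝ, ∀ x ∈ cube, vdiv (u t) x = 0)
    (hbcu : ∀ t : ℝ, TangentialBC (u t))
    (hbcp : ∀ t : ℝ, ∀ x : R3, onBdry x →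
      (1 / 2) * dot3 (u t x) (u t x) + pt t x = 0) :
    (∀ T : ℝ, 0 ≤ T →
      (1 / 2) * (∫ x in cube, dot3 (u T x) (u T x))
        + Re⁻¹ * ∫ t in (0 : ℝ)..T, ∫ x in cube, dot3 (vcurl (u t) x) (vcurl (u t) x)
        = (1 / 2) * ∫ x in cube, dot3 (u 0 x) (u 0 x))
    ∧ (∀ T : ℝ, 0 ≤ T →
      (∫ x in cube, dot3 (u T x) (u T x)) ≤ ∫ x in cube, dot3 (u 0 x) (u 0 x)) := by
  have hslice : ∀ t, ContDiff ℝ 2 (u t) := fun t => NS_slice_contDiff hu t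
  -- the Bernoulli pressure
  set P : ℝ → R3 → ℝ := fun t y => (1 / 2) * dot3 (u t y) (u t y) + pt t y with hPdef
  have hPt : ∀ t, ContDiff ℝ 1 (P t) := by
    intro t
    have h1 : ContDiff ℝ 1 fun y => dot3 (u t y) (u t y) := by
      have hc : ∀ k : Fin 3, ContDiff ℝ 1 fun y => u t y k := fun k =>
        (NS_comp_contDiff (hslice t) k).of_le (by norm_num)
      exact (((hc 0).mul (hc 0)).add ((hc 1).mul (hc 1))).add ((hc 2).mul (hc 2))
    exact (contDiff_const.mul h1).add (hp.comp ((contDiff_const (c := t)).prodMk contDiff_id))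
  -- the two auxiliary vector fields
  have hF1C : ∀ t, ContDiff ℝ 1 fun y => cross3 (u t y) (vcurl (u t) y) := fun t =>
    NS_cross_contDiff (hslice t)
  have hF2C : ∀ t, ContDiff ℝ 1 fun y => fun i => P t y * u t y i := by
    intro t
    rw [contDiff_pi]
    intro i
    exact (hPt t).mul ((NS_comp_contDiff (hslice t) i).of_le (by norm_num))
  -- boundary conditions for the fluxes
  have hbF1 : ∀ t, ∀ x ∈ cube, ∀ i : Fin 3, onFace x i →
      cross3 (u t x) (vcurl (u t) x) i = 0 := by
    intro t x hx i hf
    fin_cases i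
    · have h1 : u t x 1 = 0 := hbcu t x hx 0 hf 1 (by decide)
      have h2 : u t x 2 = 0 := hbcu t x hx 0 hf 2 (by decide)
      simp [cross3, h1, h2]
    · have h1 : u t x 0 = 0 := hbcu t x hx 1 hf 0 (by decide)
      have h2 : u t x 2 = 0 := hbcu t x hx 1 hf 2 (by decide)
      simp [cross3, h1, h2]
    · have h1 : u t x 0 = 0 := hbcu t x hx 2 hf 0 (by decide)
      have h2 : u t x 1 = 0 := hbcu t x hx 2 hf 1 (by decide)
      simp [cross3, h1, h2]
  have hbF2 : ∀ t, ∀ x ∈ cube, ∀ i : Fin 3, onFace x i →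
      (fun i => P t x * u t x i) i = 0 := by
    intro t x hx i hf
    have hP0 : P t x = 0 := hbcp t x ⟨hx, i, hf⟩
    show P t x * u t x i = 0
    rw [hP0, zero_mul]
  -- vanishing flux integrals
  have hI1 : ∀ t, ∫ x in cube, vdiv (fun y => cross3 (u t y) (vcurl (u t) y)) x = 0 :=
    fun t => NS_integral_vdiv_eq_zero (hF1C t) (hbF1 t)
  have hI2 : ∀ t, ∫ x in cube, vdiv (fun y => fun i => P t y * u t y i) x = 0 :=
    fun t => NS_integral_vdiv_eq_zero (hF2C t) (hbF2 t)
  -- the pointwise energy identity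
  have hpointwise : ∀ t, ∀ x ∈ cube,
      2 * dot3 (u t x) (dtv u t x)
        = (2 * Re⁻¹) * vdiv (fun y => cross3 (u t y) (vcurl (u t) y)) x
          - 2 * vdiv (fun y => fun i => P t y * u t y i) x
          + (-(2 * Re⁻¹)) * dot3 (vcurl (u t) x) (vcurl (u t) x) := by
    intro t x hx
    have hcross := NS_vdiv_cross_eq (hslice t) x
    have hsmul := NS_vdiv_smul_eq (hslice t) ((hPt t).differentiable (by norm_num)) x
    have hd0 := hdiv t x hx
    have m : ∀ i : Fin 3, dtv u t x i - cross3 (u t x) (vcurl (u t) x) i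
        + Re⁻¹ * vcurl (vcurl (u t)) x i + vgrad (P t) x i = 0 := by
      intro i
      have := congrFun (hmom t x hx) i
      simpa only [Pi.add_apply, Pi.sub_apply, Pi.smul_apply, smul_eq_mul,
        Pi.zero_apply, hPdef] using this
    have m0 := m 0
    have m1 := m 1
    have m2 := m 2
    rw [hcross, hsmul, hd0]
    simp only [dot3, cross3, vcurl, vgrad, Matrix.cons_val_zero, Matrix.cons_val_one,
      Matrix.head_cons, Matrix.cons_val_two, Matrix.tail_cons] at m0 m1 m2 ⊢
    linear_combination (2 * u t x 0) * m0 + (2 * u t x 1) * m1 + (2 * u t x 2) * m2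
  -- the integrated energy identity
  have hInt_eq : ∀ t, (∫ x in cube, 2 * dot3 (u t x) (dtv u t x))
      = -(2 * Re⁻¹) * ∫ x in cube, dot3 (vcurl (u t) x) (vcurl (u t) x) := by
    intro t
    have i1 : IntegrableOn (fun x => vdiv (fun y => cross3 (u t y) (vcurl (u t) y)) x)
        cube volume :=
      ((NS_vdiv_cont (hF1C t)).continuousOn).integrableOn_compact NS_cube_compact
    have i2 : IntegrableOn (fun x => vdiv (fun y => fun i => P t y * u t y i) x)
        cube volume :=
      ((NS_vdiv_cont (hF2C t)).continuousOn).integrableOn_compact NS_cube_compact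
    have i3 : IntegrableOn (fun x => dot3 (vcurl (u t) x) (vcurl (u t) x)) cube volume :=
      (((NS_curlsq_joint_cont hu).comp
        (continuous_const.prodMk continuous_id)).continuousOn).integrableOn_compact
        NS_cube_compact
    rw [setIntegral_congr_fun NS_cube_meas (fun x hx => hpointwise t x hx)]
    have e1 : Integrable (fun x => (2 * Re⁻¹) *
        vdiv (fun y => cross3 (u t y) (vcurl (u t) y)) x) (volume.restrict cube) :=
      i1.const_mul (2 * Re⁻¹)
    have e2 : Integrable (fun x => 2 * vdiv (fun y => fun i => P t y * u t y i) x)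
        (volume.restrict cube) := i2.const_mul 2
    have e3 : Integrable (fun x => (-(2 * Re⁻¹)) * dot3 (vcurl (u t) x) (vcurl (u t) x))
        (volume.restrict cube) := i3.const_mul _
    have e12 : Integrable (fun x => (2 * Re⁻¹) *
        vdiv (fun y => cross3 (u t y) (vcurl (u t) y)) x
          - 2 * vdiv (fun y => fun i => P t y * u t y i) x) (volume.restrict cube) :=
      e1.sub e2
    rw [integral_add e12 e3, integral_sub e1 e2,
      integral_const_mul, integral_const_mul, integral_const_mul, hI1 t, hI2 t]
    ring
  -- derivative of the energy
  have hE' : ∀ t₀, HasDerivAt (fun t => ∫ x in cube, dot3 (u t x) (u t x))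
      (-(2 * Re⁻¹) * ∫ x in cube, dot3 (vcurl (u t₀) x) (vcurl (u t₀) x)) t₀ := by
    intro t₀
    have h1 := NS_hasDerivAt_integral_cube (f := fun t x => dot3 (u t x) (u t x))
      (f' := fun t x => 2 * dot3 (u t x) (dtv u t x))
      (NS_usq_joint_cont hu) (NS_udotdtv_joint_cont hu)
      (fun t x => NS_hasDerivAt_energy_density hu t x) t₀
    rwa [hInt_eq t₀] at h1
  -- continuity of the dissipation
  have hDcont : Continuous fun t => ∫ x in cube, dot3 (vcurl (u t) x) (vcurl (u t) x) :=
    NS_cont_integral_cube (NS_curlsq_joint_cont hu)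
  have hDnonneg : ∀ t, 0 ≤ ∫ x in cube, dot3 (vcurl (u t) x) (vcurl (u t) x) := by
    intro t
    apply setIntegral_nonneg NS_cube_meas
    intro x _
    show (0:ℝ) ≤ dot3 (vcurl (u t) x) (vcurl (u t) x)
    simp only [dot3]
    have h0 := mul_self_nonneg (vcurl (u t) x 0)
    have h1 := mul_self_nonneg (vcurl (u t) x 1)
    have h2 := mul_self_nonneg (vcurl (u t) x 2)
    linarith
  -- the main energy balance
  have key : ∀ T : ℝ, 0 ≤ T →
      (1 / 2) * (∫ x in cube, dot3 (u T x) (u T x))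
        + Re⁻¹ * ∫ t in (0 : ℝ)..T, ∫ x in cube, dot3 (vcurl (u t) x) (vcurl (u t) x)
        = (1 / 2) * ∫ x in cube, dot3 (u 0 x) (u 0 x) := by
    intro T _
    have hFTC := intervalIntegral.integral_eq_sub_of_hasDerivAt
      (f := fun t => ∫ x in cube, dot3 (u t x) (u t x))
      (f' := fun t => -(2 * Re⁻¹) * ∫ x in cube, dot3 (vcurl (u t) x) (vcurl (u t) x))
      (a := 0) (b := T) (fun t _ => hE' t)
      ((continuous_const.mul hDcont).intervalIntegrable 0 T)
    rw [intervalIntegral.integral_const_mul] at hFTC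
    linear_combination (-(1:ℝ)/2) * hFTC
  refine ⟨key, fun T hT => ?_⟩
  have h1 := key T hT
  have h2 : 0 ≤ Re⁻¹ * ∫ t in (0:ℝ)..T, ∫ x in cube,
      dot3 (vcurl (u t) x) (vcurl (u t) x) := by
    apply mul_nonneg (inv_nonneg.mpr hRe.le)
    apply intervalIntegral.integral_nonneg hT
    intro t _
    exact hDnonneg t
  linarith
end
end
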